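/- arXiv:1711.09317 — 5 statements merged into one kernel-verified Lean document; each statement's English description precedes it below -/
import Mathlib

section
/- For every x ∈ [0,1], the point c(x) = (x, x², x³, ((x−γ₁)₊)³, ..., ((x−γ_K)₊)³) lies in the convex hull of the K+4 points {v₁, ..., v_{K+4}}. -/
/-- The curve `c(x) = (x, x², x³, ((x−γ₁)₊)³, …, ((x−γ_K)₊)³)` in `ℝ^{K+3}`. -/
noncomputable def pyrCurve (K : ℕ) (γ : Fin K → ℝ) (x : ℝ) : Fin (K + 3) → ℝ :=
  fun i =>
    if h0 : i.val = 0 then x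
    else if h1 : i.val = 1 then x ^ 2
    else if h2 : i.val = 2 then x ^ 3
    else (max (x - γ ⟨i.val - 3, by have := i.isLt; omega⟩) 0) ^ 3

/-- The `K+4` vertices `v₁, …, v_{K+4}` of the enclosing polytope in `ℝ^{K+3}`
(here `0`-indexed: `pyrVert K γ p` is `v_{p+1}`). -/
noncomputable def pyrVert (K : ℕ) (γ : Fin K → ℝ) (p : Fin (K + 4)) : Fin (K + 3) → ℝ :=
  fun i =>
    if hp0 : p.val = 0 then 0
    else if hp1 : p.val = 1 then
      if i.val = 0 then 1 / 2 else 0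
    else if hp2 : p.val = 2 then
      if i.val = 0 then 2 / 3 else if i.val = 1 then 1 / 3 else 0
    else if hpl : p.val = K + 3 then
      if hi : i.val ≤ 2 then 1
      else (1 - γ ⟨i.val - 3, by have := i.isLt; omega⟩) ^ 3
    else
      let k : Fin K := ⟨p.val - 3, by have := p.isLt; omega⟩
      if hi0 : i.val = 0 then (2 + γ k) / 3
      else if hi1 : i.val = 1 then (1 + 2 * γ k) / 3
      else if hi2 : i.val = 2 then γ k
      else
        let j : Fin K := ⟨i.val - 3, by have := i.isLt; omega⟩
        if j.val < k.val then (γ k - γ j) * (1 - γ j) ^ 2 else 0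

noncomputable def pyrG (K : ℕ) (γ : Fin K → ℝ) : ℕ → ℝ :=
  fun j => if h0 : j = 0 then 0 else if h : j ≤ K then γ ⟨j - 1, by omega⟩ else 1

noncomputable def pyrF (K : ℕ) (γ : Fin K → ℝ) (x : ℝ) : ℕ → ℝ :=
  fun j => (max (x - pyrG K γ j) 0) ^ 3 / (1 - pyrG K γ j) ^ 2

noncomputable def pyrM (K : ℕ) (γ : Fin K → ℝ) (x : ℝ) : ℕ → ℝ :=
  fun k => (pyrF K γ x (k + 1) - pyrF K γ x k) / (pyrG K γ (k + 1) - pyrG K γ k)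

noncomputable def pyrW (K : ℕ) (γ : Fin K → ℝ) (x : ℝ) : ℕ → ℝ :=
  fun p =>
    if p = 0 then (1 - x) ^ 2
    else if p = 1 then 2 * x * (1 - x) ^ 2
    else if p = 2 then 3 * x ^ 2 - 2 * x ^ 3 + pyrM K γ x 0
    else if p = K + 3 then -(pyrM K γ x K)
    else pyrM K γ x (p - 2) - pyrM K γ x (p - 3)

section basic
variable {K : ℕ} {γ : Fin K → ℝ} {x : ℝ}

lemma pyrG_zero : pyrG K γ 0 = 0 := by simp [pyrG]

lemma pyrG_last : pyrG K γ (K + 1) = 1 := by simp [pyrG]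

lemma pyrG_pos_eq {j : ℕ} (hj0 : j ≠ 0) (hjK : j ≤ K) :
    pyrG K γ j = γ ⟨j - 1, by omega⟩ := by
  simp only [pyrG]; rw [dif_neg hj0, dif_pos hjK]

lemma pyrG_knot {q : ℕ} (hq : q < K) : pyrG K γ (q + 1) = γ ⟨q, hq⟩ := by
  rw [pyrG_pos_eq (by omega) (by omega)]
  exact congrArg γ (Fin.ext (by simp))

lemma pyrG_mono (hγ0 : ∀ k, 0 < γ k) (hγ1 : ∀ k, γ k < 1) (hγmono : StrictMono γ) :
    ∀ j k, j < k → k ≤ K + 1 → pyrG K γ j < pyrG K γ k := by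
  intro j k hjk hk
  rcases Nat.lt_or_ge k (K + 1) with hkK | hkK
  · have hkK' : k ≤ K := by omega
    rw [pyrG_pos_eq (by omega) hkK']
    rcases Nat.eq_zero_or_pos j with rfl | hj0
    · rw [pyrG_zero]; exact hγ0 _
    · rw [pyrG_pos_eq (by omega) (by omega)]
      exact hγmono (by simp only [Fin.mk_lt_mk]; omega)
  · have hk' : k = K + 1 := by omega
    subst hk'
    rw [pyrG_last]
    rcases Nat.eq_zero_or_pos j with rfl | hj0
    · rw [pyrG_zero]; norm_num
    · rw [pyrG_pos_eq (by omega) (by omega)]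
      exact hγ1 _

lemma pyrG_nonneg (hγ0 : ∀ k, 0 < γ k) : ∀ j, 0 ≤ pyrG K γ j := by
  intro j
  simp only [pyrG]
  split_ifs with h1 h2
  · exact le_refl 0
  · exact (hγ0 _).le
  · norm_num

lemma pyrG_le_one (hγ1 : ∀ k, γ k < 1) : ∀ j, pyrG K γ j ≤ 1 := by
  intro j
  simp only [pyrG]
  split_ifs with h1 h2
  · norm_num
  · exact (hγ1 _).le
  · exact le_refl 1

lemma pyrF_nonneg : ∀ j, 0 ≤ pyrF K γ x j := fun j =>
  div_nonneg (pow_nonneg (le_max_right _ 0) 3) (sq_nonneg _)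

lemma pyrF_zero (hx0 : 0 ≤ x) : pyrF K γ x 0 = x ^ 3 := by
  simp [pyrF, pyrG_zero, max_eq_left hx0]

lemma pyrF_last (hx1 : x ≤ 1) : pyrF K γ x (K + 1) = 0 := by
  simp [pyrF, pyrG_last, max_eq_right (by linarith : x - 1 ≤ 0)]

end basic

-- positivity helper
lemma pyrMono4 (u v w s : ℝ) (hu : 0 ≤ u) (hv : 0 ≤ v) (hw : 0 ≤ w) (hs : 0 ≤ s)
    (i j k l : ℕ) : 0 ≤ u ^ i * v ^ j * w ^ k * s ^ l :=
  mul_nonneg (mul_nonneg (mul_nonneg (pow_nonneg hu i) (pow_nonneg hv j)) (pow_nonneg hw k))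
    (pow_nonneg hs l)

/-- three-point convexity inequality for `t ↦ ((x-t)₊)³/(1-t)²`. -/
lemma pyrKey (x a b c : ℝ) (hx1 : x ≤ 1) (ha : 0 ≤ a) (hab : a < b) (hbc : b < c)
    (hc1 : c ≤ 1) :
    (max (x - b) 0) ^ 3 / (1 - b) ^ 2 * (c - a)
      ≤ (max (x - a) 0) ^ 3 / (1 - a) ^ 2 * (c - b)
        + (max (x - c) 0) ^ 3 / (1 - c) ^ 2 * (b - a) := by
  have hb1 : b < 1 := lt_of_lt_of_le hbc hc1
  have ha1 : a < 1 := hab.trans hb1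
  have h1a : (0:ℝ) < 1 - a := by linarith
  have h1b : (0:ℝ) < 1 - b := by linarith
  rcases le_or_gt x b with hxb | hbx
  · rw [max_eq_right (by linarith : x - b ≤ 0), max_eq_right (by linarith : x - c ≤ 0)]
    have h1 : (0:ℝ) ≤ (max (x - a) 0) ^ 3 / (1 - a) ^ 2 * (c - b) := by
      apply mul_nonneg (div_nonneg (pow_nonneg (le_max_right _ 0) 3) (sq_nonneg _))
      linarith
    simp only [ne_eq, OfNat.ofNat_ne_zero, not_false_eq_true, zero_pow, zero_div, zero_mul]
    linarith
  · rcases le_or_gt x c with hxc | hcx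
    · rw [max_eq_right (by linarith : x - c ≤ 0), max_eq_left (by linarith : 0 ≤ x - a),
        max_eq_left (by linarith : 0 ≤ x - b)]
      simp only [ne_eq, OfNat.ofNat_ne_zero, not_false_eq_true, zero_pow, zero_div, zero_mul,
        add_zero]
      rw [div_mul_eq_mul_div, div_mul_eq_mul_div, div_le_div_iff₀ (by positivity) (by positivity)]
      have H := pyrMono4 (b - a) (x - b) (c - x) (1 - x) (by linarith) (by linarith)
        (by linarith) (by linarith)
      have h01 := H 1 2 1 2; have h02 := H 1 3 0 2; have h03 := H 1 3 1 1
      have h04 := H 1 4 0 1; have h05 := H 1 4 1 0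
      have h06 := H 2 1 1 2; have h07 := H 2 2 0 2; have h08 := H 2 2 1 1
      have h09 := H 2 3 0 1; have h10 := H 2 3 1 0
      have h11 := H 3 0 1 2; have h12 := H 3 1 0 2; have h13 := H 3 1 1 1
      have h14 := H 3 2 0 1; have h15 := H 3 2 1 0
      linarith
    · have hc1' : c < 1 := lt_of_lt_of_le hcx hx1
      have h1c : (0:ℝ) < 1 - c := by linarith
      rw [max_eq_left (by linarith : 0 ≤ x - a), max_eq_left (by linarith : 0 ≤ x - b),
        max_eq_left (by linarith : 0 ≤ x - c), ← sub_nonneg]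
      have H := pyrMono4 (b - a) (c - b) (x - c) (1 - x) (by linarith) (by linarith)
        (by linarith) (by linarith)
      have hE : (0:ℝ) ≤ 3*(b-a)*(c-b)^2*(x-c)*(1-x)^4 + 6*(b-a)*(c-b)^2*(x-c)^2*(1-x)^3
          + 3*(b-a)*(c-b)^2*(x-c)^3*(1-x)^2 + 2*(b-a)*(c-b)^3*(1-x)^4
          + 8*(b-a)*(c-b)^3*(x-c)*(1-x)^3 + 6*(b-a)*(c-b)^3*(x-c)^2*(1-x)^2
          + 2*(b-a)*(c-b)^4*(1-x)^3 + 3*(b-a)*(c-b)^4*(x-c)*(1-x)^2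
          + 3*(b-a)^2*(c-b)*(x-c)*(1-x)^4 + 6*(b-a)^2*(c-b)*(x-c)^2*(1-x)^3
          + 3*(b-a)^2*(c-b)*(x-c)^3*(1-x)^2 + 3*(b-a)^2*(c-b)^2*(1-x)^4
          + 12*(b-a)^2*(c-b)^2*(x-c)*(1-x)^3 + 9*(b-a)^2*(c-b)^2*(x-c)^2*(1-x)^2
          + 4*(b-a)^2*(c-b)^3*(1-x)^3 + 6*(b-a)^2*(c-b)^3*(x-c)*(1-x)^2
          + (b-a)^3*(c-b)*(1-x)^4 + 4*(b-a)^3*(c-b)*(x-c)*(1-x)^3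
          + 3*(b-a)^3*(c-b)*(x-c)^2*(1-x)^2 + 2*(b-a)^3*(c-b)^2*(1-x)^3
          + 3*(b-a)^3*(c-b)^2*(x-c)*(1-x)^2 := by
        have h01 := H 1 2 1 4; have h02 := H 1 2 2 3; have h03 := H 1 2 3 2
        have h04 := H 1 3 0 4; have h05 := H 1 3 1 3; have h06 := H 1 3 2 2
        have h07 := H 1 4 0 3; have h08 := H 1 4 1 2
        have h09 := H 2 1 1 4; have h10 := H 2 1 2 3; have h11 := H 2 1 3 2
        have h12 := H 2 2 0 4; have h13 := H 2 2 1 3; have h14 := H 2 2 2 2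
        have h15 := H 2 3 0 3; have h16 := H 2 3 1 2
        have h17 := H 3 1 0 4; have h18 := H 3 1 1 3; have h19 := H 3 1 2 2
        have h20 := H 3 2 0 3; have h21 := H 3 2 1 2
        linarith
      have heq : (x - a) ^ 3 / (1 - a) ^ 2 * (c - b) + (x - c) ^ 3 / (1 - c) ^ 2 * (b - a)
          - (x - b) ^ 3 / (1 - b) ^ 2 * (c - a)
          = (3*(b-a)*(c-b)^2*(x-c)*(1-x)^4 + 6*(b-a)*(c-b)^2*(x-c)^2*(1-x)^3
          + 3*(b-a)*(c-b)^2*(x-c)^3*(1-x)^2 + 2*(b-a)*(c-b)^3*(1-x)^4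
          + 8*(b-a)*(c-b)^3*(x-c)*(1-x)^3 + 6*(b-a)*(c-b)^3*(x-c)^2*(1-x)^2
          + 2*(b-a)*(c-b)^4*(1-x)^3 + 3*(b-a)*(c-b)^4*(x-c)*(1-x)^2
          + 3*(b-a)^2*(c-b)*(x-c)*(1-x)^4 + 6*(b-a)^2*(c-b)*(x-c)^2*(1-x)^3
          + 3*(b-a)^2*(c-b)*(x-c)^3*(1-x)^2 + 3*(b-a)^2*(c-b)^2*(1-x)^4
          + 12*(b-a)^2*(c-b)^2*(x-c)*(1-x)^3 + 9*(b-a)^2*(c-b)^2*(x-c)^2*(1-x)^2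
          + 4*(b-a)^2*(c-b)^3*(1-x)^3 + 6*(b-a)^2*(c-b)^3*(x-c)*(1-x)^2
          + (b-a)^3*(c-b)*(1-x)^4 + 4*(b-a)^3*(c-b)*(x-c)*(1-x)^3
          + 3*(b-a)^3*(c-b)*(x-c)^2*(1-x)^2 + 2*(b-a)^3*(c-b)^2*(1-x)^3
          + 3*(b-a)^3*(c-b)^2*(x-c)*(1-x)^2)
            / ((1 - a) ^ 2 * (1 - b) ^ 2 * (1 - c) ^ 2) := by
        field_simp
        ring
      rw [heq]
      exact div_nonneg hE (by positivity)

/-- nonnegativity of the third weight. -/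
lemma pyrLam2 (x b : ℝ) (hx0 : 0 ≤ x) (hx1 : x ≤ 1) (hb0 : 0 < b) (hb1 : b ≤ 1) :
    0 ≤ 3 * x ^ 2 - 2 * x ^ 3 + ((max (x - b) 0) ^ 3 / (1 - b) ^ 2 - x ^ 3) / b := by
  set F : ℝ := (max (x - b) 0) ^ 3 / (1 - b) ^ 2 with hF
  have hkey : 0 ≤ b * (3 * x ^ 2 - 2 * x ^ 3) + F - x ^ 3 := by
    rcases le_or_gt x b with hxb | hbx
    · have hFnn : 0 ≤ F := div_nonneg (pow_nonneg (le_max_right _ 0) 3) (sq_nonneg _)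
      nlinarith [mul_nonneg (mul_nonneg hx0 hx0) (sub_nonneg.2 hxb),
        mul_nonneg (mul_nonneg (mul_nonneg hx0 hx0) hx0) (sub_nonneg.2 hb1)]
    · have hb1' : b < 1 := lt_of_lt_of_le hbx hx1
      have h1b : (0:ℝ) < 1 - b := by linarith
      rw [hF, max_eq_left (by linarith : 0 ≤ x - b)]
      have hE3 : (x - b) ^ 3 + (1 - b) ^ 2 * (b * (3 * x ^ 2 - 2 * x ^ 3) - x ^ 3)
          = b ^ 2 * (1 - x) ^ 2 * (3 * x - b * (1 + 2 * x)) := by ring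
      have hpos : 0 ≤ b ^ 2 * (1 - x) ^ 2 * (3 * x - b * (1 + 2 * x)) := by
        apply mul_nonneg (by positivity)
        nlinarith [mul_nonneg (sub_nonneg.2 hbx.le) (sub_nonneg.2 hx1)]
      have heq : b * (3 * x ^ 2 - 2 * x ^ 3) + (x - b) ^ 3 / (1 - b) ^ 2 - x ^ 3
          = ((x - b) ^ 3 + (1 - b) ^ 2 * (b * (3 * x ^ 2 - 2 * x ^ 3) - x ^ 3)) / (1 - b) ^ 2 := by
        field_simp
        ring
      rw [heq, hE3]
      exact div_nonneg hpos (by positivity)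
  have heq2 : 3 * x ^ 2 - 2 * x ^ 3 + (F - x ^ 3) / b
      = (b * (3 * x ^ 2 - 2 * x ^ 3) + F - x ^ 3) / b := by
    field_simp
    ring
  rw [heq2]
  exact div_nonneg hkey hb0.le

section tele
variable {K : ℕ} {γ : Fin K → ℝ} {x : ℝ}

lemma pyr_sum_tele (f : ℕ → ℝ) {a b : ℕ} (hab : a ≤ b) :
    ∑ k ∈ Finset.Ico a b, (f (k + 1) - f k) = f b - f a := by
  rw [Finset.sum_Ico_eq_sum_range]
  have := Finset.sum_range_sub (fun i => f (a + i)) (b - a)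
  rw [show ∑ i ∈ Finset.range (b - a), (f (a + i + 1) - f (a + i))
      = ∑ i ∈ Finset.range (b - a), (f (a + (i + 1)) - f (a + i)) by
    apply Finset.sum_congr rfl; intro i _; ring_nf]
  rw [this, Nat.add_sub_cancel' hab, Nat.add_zero]

lemma pyrM_mul (hγ0 : ∀ k, 0 < γ k) (hγ1 : ∀ k, γ k < 1) (hγmono : StrictMono γ)
    {k : ℕ} (hk : k ≤ K) :
    pyrM K γ x k * (pyrG K γ (k + 1) - pyrG K γ k) = pyrF K γ x (k + 1) - pyrF K γ x k := by
  apply div_mul_cancel₀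
  have := pyrG_mono hγ0 hγ1 hγmono k (k + 1) (by omega) (by omega)
  linarith

noncomputable def pyrP (K : ℕ) (γ : Fin K → ℝ) (x : ℝ) (j : ℕ) : ℝ :=
  (∑ k ∈ Finset.Ico j K, (pyrM K γ x (k + 1) - pyrM K γ x k) * (pyrG K γ (k + 1) - pyrG K γ j))
    - pyrM K γ x K * (1 - pyrG K γ j)

lemma pyrP_eq (hγ0 : ∀ k, 0 < γ k) (hγ1 : ∀ k, γ k < 1) (hγmono : StrictMono γ)
    (hx1 : x ≤ 1) :
    ∀ d j, j + d = K → pyrP K γ x j = pyrF K γ x j := by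
  intro d
  induction d with
  | zero =>
    intro j hj
    rw [show j = K from by omega]
    rw [pyrP, Finset.Ico_self, Finset.sum_empty, zero_sub]
    rw [show (1 : ℝ) - pyrG K γ K = pyrG K γ (K + 1) - pyrG K γ K from by rw [pyrG_last]]
    rw [pyrM_mul hγ0 hγ1 hγmono (le_refl K), pyrF_last hx1]
    ring
  | succ d ih =>
    intro j hj
    have hjK : j < K := by omega
    have hstep : pyrP K γ x j = pyrP K γ x (j + 1) - (pyrF K γ x (j + 1) - pyrF K γ x j) := by
      simp only [pyrP]
      rw [Finset.sum_eq_sum_Ico_succ_bot hjK]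
      have h2 : ∑ k ∈ Finset.Ico (j+1) K,
            (pyrM K γ x (k+1) - pyrM K γ x k) * (pyrG K γ (k+1) - pyrG K γ j)
          = ∑ k ∈ Finset.Ico (j+1) K,
            ((pyrM K γ x (k+1) - pyrM K γ x k) * (pyrG K γ (k+1) - pyrG K γ (j+1))
             + (pyrM K γ x (k+1) - pyrM K γ x k) * (pyrG K γ (j+1) - pyrG K γ j)) :=
        Finset.sum_congr rfl (fun k _ => by ring)
      rw [h2, Finset.sum_add_distrib, ← Finset.sum_mul,
        pyr_sum_tele (pyrM K γ x) (by omega : j + 1 ≤ K)]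
      have hMj := pyrM_mul (x := x) hγ0 hγ1 hγmono (le_of_lt hjK)
      linear_combination -hMj
    rw [hstep, ih (j + 1) (by omega)]
    ring

end tele

section vert
variable {K : ℕ} {γ : Fin K → ℝ} {x : ℝ}

lemma pyrW_0 : pyrW K γ x 0 = (1 - x) ^ 2 := by simp [pyrW]

lemma pyrW_1 : pyrW K γ x 1 = 2 * x * (1 - x) ^ 2 := by simp [pyrW]

lemma pyrW_2 : pyrW K γ x 2 = 3 * x ^ 2 - 2 * x ^ 3 + pyrM K γ x 0 := by simp [pyrW]

lemma pyrW_top : pyrW K γ x (K + 3) = -(pyrM K γ x K) := by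
  simp only [pyrW]
  rw [if_neg (by omega), if_neg (by omega), if_neg (by omega)]
  simp

lemma pyrW_knot {q : ℕ} (hq : q < K) :
    pyrW K γ x (q + 3) = pyrM K γ x (q + 1) - pyrM K γ x q := by
  simp only [pyrW]
  rw [if_neg (by omega), if_neg (by omega), if_neg (by omega), if_neg (by omega)]
  congr 1 <;> omega

lemma pyrVert_zero (i : Fin (K + 3)) : pyrVert K γ ⟨0, by omega⟩ i = 0 := by
  simp [pyrVert]

lemma pyrVert_one (i : Fin (K + 3)) :
    pyrVert K γ ⟨1, by omega⟩ i = if i.val = 0 then 1 / 2 else 0 := by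
  simp [pyrVert]

lemma pyrVert_two (i : Fin (K + 3)) :
    pyrVert K γ ⟨2, by omega⟩ i
      = if i.val = 0 then 2 / 3 else if i.val = 1 then 1 / 3 else 0 := by
  simp [pyrVert]

lemma pyrVert_top_lo (i : Fin (K + 3)) (hi : i.val ≤ 2) :
    pyrVert K γ ⟨K + 3, by omega⟩ i = 1 := by
  simp only [pyrVert]
  rw [dif_neg (show ¬(K + 3 = 0) by omega), dif_neg (show ¬(K + 3 = 1) by omega),
    dif_neg (show ¬(K + 3 = 2) by omega)]
  rw [dif_pos trivial, dif_pos hi]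

lemma pyrVert_top_hi {J : ℕ} (hJ : J < K) (i : Fin (K + 3)) (hi : i.val = J + 3) :
    pyrVert K γ ⟨K + 3, by omega⟩ i = (1 - pyrG K γ (J + 1)) ^ 3 := by
  simp only [pyrVert]
  rw [dif_neg (show ¬(K + 3 = 0) by omega), dif_neg (show ¬(K + 3 = 1) by omega),
    dif_neg (show ¬(K + 3 = 2) by omega)]
  rw [dif_pos trivial, dif_neg (show ¬(i.val ≤ 2) by omega), pyrG_knot hJ]
  simp only [show i.val - 3 = J from by omega]

lemma pyrVert_knot_0 {q : ℕ} (hq : q < K) (i : Fin (K + 3)) (hi : i.val = 0) :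
    pyrVert K γ ⟨q + 3, by omega⟩ i = (2 + pyrG K γ (q + 1)) / 3 := by
  simp only [pyrVert]
  rw [dif_neg (show ¬(q + 3 = 0) by omega), dif_neg (show ¬(q + 3 = 1) by omega),
    dif_neg (show ¬(q + 3 = 2) by omega), dif_neg (show ¬(q + 3 = K + 3) by omega),
    dif_pos hi, pyrG_knot hq]
  rfl

lemma pyrVert_knot_1 {q : ℕ} (hq : q < K) (i : Fin (K + 3)) (hi : i.val = 1) :
    pyrVert K γ ⟨q + 3, by omega⟩ i = (1 + 2 * pyrG K γ (q + 1)) / 3 := by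
  simp only [pyrVert]
  rw [dif_neg (show ¬(q + 3 = 0) by omega), dif_neg (show ¬(q + 3 = 1) by omega),
    dif_neg (show ¬(q + 3 = 2) by omega), dif_neg (show ¬(q + 3 = K + 3) by omega),
    dif_neg (show ¬(i.val = 0) by omega), dif_pos hi, pyrG_knot hq]
  rfl

lemma pyrVert_knot_2 {q : ℕ} (hq : q < K) (i : Fin (K + 3)) (hi : i.val = 2) :
    pyrVert K γ ⟨q + 3, by omega⟩ i = pyrG K γ (q + 1) := by
  simp only [pyrVert]
  rw [dif_neg (show ¬(q + 3 = 0) by omega), dif_neg (show ¬(q + 3 = 1) by omega),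
    dif_neg (show ¬(q + 3 = 2) by omega), dif_neg (show ¬(q + 3 = K + 3) by omega),
    dif_neg (show ¬(i.val = 0) by omega), dif_neg (show ¬(i.val = 1) by omega),
    dif_pos hi, pyrG_knot hq]
  rfl

lemma pyrVert_knot_hi {q J : ℕ} (hq : q < K) (hJ : J < K) (i : Fin (K + 3))
    (hi : i.val = J + 3) :
    pyrVert K γ ⟨q + 3, by omega⟩ i
      = if J < q then (pyrG K γ (q + 1) - pyrG K γ (J + 1)) * (1 - pyrG K γ (J + 1)) ^ 2
        else 0 := by
  simp only [pyrVert]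
  rw [dif_neg (show ¬(q + 3 = 0) by omega), dif_neg (show ¬(q + 3 = 1) by omega),
    dif_neg (show ¬(q + 3 = 2) by omega), dif_neg (show ¬(q + 3 = K + 3) by omega),
    dif_neg (show ¬(i.val = 0) by omega), dif_neg (show ¬(i.val = 1) by omega),
    dif_neg (show ¬(i.val = 2) by omega)]
  by_cases hJq : J < q
  · rw [if_pos (show i.val - 3 < q + 3 - 3 by omega), if_pos hJq, pyrG_knot hq, pyrG_knot hJ]
    simp only [show i.val - 3 = J from by omega]
    rfl
  · rw [if_neg (show ¬(i.val - 3 < q + 3 - 3) by omega), if_neg hJq]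

lemma pyrCurve_0 (i : Fin (K + 3)) (hi : i.val = 0) : pyrCurve K γ x i = x := by
  simp only [pyrCurve]; rw [dif_pos hi]

lemma pyrCurve_1 (i : Fin (K + 3)) (hi : i.val = 1) : pyrCurve K γ x i = x ^ 2 := by
  simp only [pyrCurve]; rw [dif_neg (by omega), dif_pos hi]

lemma pyrCurve_2 (i : Fin (K + 3)) (hi : i.val = 2) : pyrCurve K γ x i = x ^ 3 := by
  simp only [pyrCurve]; rw [dif_neg (by omega), dif_neg (by omega), dif_pos hi]

lemma pyrCurve_hi {J : ℕ} (hJ : J < K) (i : Fin (K + 3)) (hi : i.val = J + 3) :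
    pyrCurve K γ x i = (max (x - pyrG K γ (J + 1)) 0) ^ 3 := by
  simp only [pyrCurve]
  rw [dif_neg (by omega), dif_neg (by omega), dif_neg (by omega), pyrG_knot hJ]
  simp only [show i.val - 3 = J from by omega]

end vert

section nonneg
variable {K : ℕ} {γ : Fin K → ℝ} {x : ℝ}

lemma pyrM_mono (hγ0 : ∀ k, 0 < γ k) (hγ1 : ∀ k, γ k < 1) (hγmono : StrictMono γ)
    (hx1 : x ≤ 1) {q : ℕ} (hq : q + 1 ≤ K) :
    pyrM K γ x q ≤ pyrM K γ x (q + 1) := by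
  have hab := pyrG_mono (γ := γ) hγ0 hγ1 hγmono q (q + 1) (by omega) (by omega)
  have hbc := pyrG_mono (γ := γ) hγ0 hγ1 hγmono (q + 1) (q + 2) (by omega) (by omega)
  have ha := pyrG_nonneg (γ := γ) hγ0 q
  have hc1 := pyrG_le_one (γ := γ) hγ1 (q + 2)
  have key := pyrKey x (pyrG K γ q) (pyrG K γ (q + 1)) (pyrG K γ (q + 2)) hx1 ha hab hbc hc1
  rw [pyrM, pyrM, div_le_div_iff₀ (by linarith) (by linarith)]
  simp only [pyrF] at key ⊢
  rw [show q + 1 + 1 = q + 2 from rfl]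
  nlinarith [key]

lemma pyrW_nonneg (hγ0 : ∀ k, 0 < γ k) (hγ1 : ∀ k, γ k < 1) (hγmono : StrictMono γ)
    (hx0 : 0 ≤ x) (hx1 : x ≤ 1) (p : ℕ) (hp4 : p < K + 4) : 0 ≤ pyrW K γ x p := by
  have hG1pos : 0 < pyrG K γ 1 := by
    have := pyrG_mono (γ := γ) hγ0 hγ1 hγmono 0 1 (by omega) (by omega)
    rwa [pyrG_zero] at this
  simp only [pyrW]
  split_ifs with h0 h1 h2 h3
  · positivity
  · have := mul_nonneg hx0 (sq_nonneg (1 - x)); nlinarith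
  · -- third weight
    have hM0 : pyrM K γ x 0 = (pyrF K γ x 1 - x ^ 3) / pyrG K γ 1 := by
      rw [pyrM, pyrF_zero hx0, pyrG_zero, sub_zero]
    rw [hM0]
    exact pyrLam2 x (pyrG K γ 1) hx0 hx1 hG1pos (pyrG_le_one hγ1 1)
  · -- p = K + 3
    rw [pyrM, pyrF_last hx1, pyrG_last, zero_sub, neg_nonneg]
    apply div_nonpos_of_nonpos_of_nonneg
    · simp [pyrF_nonneg (K := K) (γ := γ) (x := x) K]
    · have := pyrG_le_one (γ := γ) hγ1 K; linarith
  · -- knot weights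
    by_cases hp : 3 ≤ p ∧ p < K + 3
    · obtain ⟨hp3, hpK⟩ := hp
      rw [show p - 2 = (p - 3) + 1 from by omega]
      have := pyrM_mono (γ := γ) hγ0 hγ1 hγmono hx1 (q := p - 3) (by omega)
      linarith
    · exfalso; omega

end nonneg

lemma pyr_peel (K : ℕ) (f : ℕ → ℝ) :
    ∑ q ∈ Finset.range (K + 4), f q
      = f 0 + f 1 + f 2 + (∑ q ∈ Finset.range K, f (q + 3)) + f (K + 3) := by
  rw [Finset.sum_range_succ, Finset.sum_range_succ', Finset.sum_range_succ',
    Finset.sum_range_succ']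
  have h : ∀ q, q + 1 + 1 + 1 = q + 3 := fun q => rfl
  simp only [h]
  ring

/-- For every `x ∈ [0,1]`, the point `c(x)` lies in the convex hull of the
`K+4` points `v₁, …, v_{K+4}`. -/
theorem curve_mem_convexHull_verts (K : ℕ) (γ : Fin K → ℝ)
    (hγ0 : ∀ k, 0 < γ k) (hγ1 : ∀ k, γ k < 1) (hγmono : StrictMono γ) :
    ∀ x ∈ Set.Icc (0 : ℝ) 1,
      pyrCurve K γ x ∈ convexHull ℝ (Set.range (pyrVert K γ)) := by
  intro x hx
  obtain ⟨hx0, hx1⟩ := hx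
  set w : Fin (K + 4) → ℝ := fun p => pyrW K γ x p.val with hw
  -- sum of weights is 1
  have hsum1 : ∑ p : Fin (K + 4), w p = 1 := by
    rw [hw]
    rw [Fin.sum_univ_eq_sum_range (fun q => pyrW K γ x q) (K + 4)]
    rw [pyr_peel K (fun q => pyrW K γ x q)]
    have hknot : ∑ q ∈ Finset.range K, pyrW K γ x (q + 3)
        = pyrM K γ x K - pyrM K γ x 0 := by
      rw [Finset.sum_congr rfl (fun q hq => pyrW_knot (Finset.mem_range.1 hq))]
      exact Finset.sum_range_sub (pyrM K γ x) K
    rw [hknot, pyrW_0, pyrW_1, pyrW_2, pyrW_top]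
    ring
  -- telescoped sums
  have hT2 : ∑ q ∈ Finset.range K,
      (pyrM K γ x (q + 1) - pyrM K γ x q) * pyrG K γ (q + 1)
      = x ^ 3 + pyrM K γ x K := by
    have hP0 := pyrP_eq (γ := γ) (x := x) hγ0 hγ1 hγmono hx1 K 0 (by omega)
    rw [pyrF_zero hx0] at hP0
    rw [pyrP] at hP0
    rw [pyrG_zero] at hP0
    simp only [sub_zero] at hP0
    rw [← Finset.range_eq_Ico] at hP0
    linarith
  have hT1 : ∑ q ∈ Finset.range K, (pyrM K γ x (q + 1) - pyrM K γ x q)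
      = pyrM K γ x K - pyrM K γ x 0 := Finset.sum_range_sub (pyrM K γ x) K
  -- center of mass is the curve point
  have hcm : ∑ p : Fin (K + 4), w p • pyrVert K γ p = pyrCurve K γ x := by
    funext i
    rw [Finset.sum_apply]
    simp only [Pi.smul_apply, smul_eq_mul, hw]
    set vn : ℕ → ℝ := fun q => if h : q < K + 4 then pyrVert K γ ⟨q, h⟩ i else 0 with hvn
    have hfin : ∑ p : Fin (K + 4), pyrW K γ x p.val * pyrVert K γ p i
        = ∑ q ∈ Finset.range (K + 4), pyrW K γ x q * vn q := by
      rw [← Fin.sum_univ_eq_sum_range (fun q => pyrW K γ x q * vn q) (K + 4)]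
      apply Finset.sum_congr rfl
      intro p _
      have : vn p.val = pyrVert K γ p i := by
        simp only [hvn]; rw [dif_pos p.isLt]
      rw [this]
    rw [hfin, pyr_peel K (fun q => pyrW K γ x q * vn q)]
    have hv0 : vn 0 = 0 := by simp only [hvn]; rw [dif_pos (by omega : (0:ℕ) < K + 4)]; exact pyrVert_zero i
    have hv1 : vn 1 = if i.val = 0 then 1 / 2 else 0 := by
      simp only [hvn]; rw [dif_pos (by omega : (1:ℕ) < K + 4)]; exact pyrVert_one i
    have hv2 : vn 2 = if i.val = 0 then 2 / 3 else if i.val = 1 then 1 / 3 else 0 := by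
      simp only [hvn]; rw [dif_pos (by omega : (2:ℕ) < K + 4)]; exact pyrVert_two i
    rcases (by omega : i.val = 0 ∨ i.val = 1 ∨ i.val = 2 ∨ (3 ≤ i.val ∧ i.val < K + 3))
      with hi | hi | hi | hi
    · -- coordinate 0
      have hvt : vn (K + 3) = 1 := by
        simp only [hvn]; rw [dif_pos (by omega : K + 3 < K + 4)]; exact pyrVert_top_lo i (by omega)
      have hknot : ∑ q ∈ Finset.range K, pyrW K γ x (q + 3) * vn (q + 3)
          = (2 / 3) * (pyrM K γ x K - pyrM K γ x 0)
            + (1 / 3) * (x ^ 3 + pyrM K γ x K) := by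
        rw [← hT1, ← hT2, Finset.mul_sum, Finset.mul_sum, ← Finset.sum_add_distrib]
        apply Finset.sum_congr rfl
        intro q hq
        have hqK := Finset.mem_range.1 hq
        rw [pyrW_knot hqK]; simp only [hvn]
        rw [dif_pos (by omega : q + 3 < K + 4), pyrVert_knot_0 hqK i hi]
        ring
      rw [hv0, hv1, hv2, hvt, hknot, if_pos hi, if_pos hi, pyrW_0, pyrW_1, pyrW_2, pyrW_top,
        pyrCurve_0 i hi]
      ring
    · -- coordinate 1
      have hvt : vn (K + 3) = 1 := by
        simp only [hvn]; rw [dif_pos (by omega : K + 3 < K + 4)]; exact pyrVert_top_lo i (by omega)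
      have hknot : ∑ q ∈ Finset.range K, pyrW K γ x (q + 3) * vn (q + 3)
          = (1 / 3) * (pyrM K γ x K - pyrM K γ x 0)
            + (2 / 3) * (x ^ 3 + pyrM K γ x K) := by
        rw [← hT1, ← hT2, Finset.mul_sum, Finset.mul_sum, ← Finset.sum_add_distrib]
        apply Finset.sum_congr rfl
        intro q hq
        have hqK := Finset.mem_range.1 hq
        rw [pyrW_knot hqK]; simp only [hvn]
        rw [dif_pos (by omega : q + 3 < K + 4), pyrVert_knot_1 hqK i hi]
        ring
      rw [hv0, hv1, hv2, hvt, hknot, if_neg (by omega), if_neg (by omega), if_pos hi,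
        pyrW_0, pyrW_1, pyrW_2, pyrW_top, pyrCurve_1 i hi]
      ring
    · -- coordinate 2
      have hvt : vn (K + 3) = 1 := by
        simp only [hvn]; rw [dif_pos (by omega : K + 3 < K + 4)]; exact pyrVert_top_lo i (by omega)
      have hknot : ∑ q ∈ Finset.range K, pyrW K γ x (q + 3) * vn (q + 3)
          = x ^ 3 + pyrM K γ x K := by
        rw [← hT2]
        apply Finset.sum_congr rfl
        intro q hq
        have hqK := Finset.mem_range.1 hq
        rw [pyrW_knot hqK]; simp only [hvn]
        rw [dif_pos (by omega : q + 3 < K + 4), pyrVert_knot_2 hqK i hi]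
      rw [hv0, hv1, hv2, hvt, hknot, if_neg (by omega), if_neg (by omega), if_neg (by omega),
        pyrW_0, pyrW_1, pyrW_2, pyrW_top, pyrCurve_2 i hi]
      ring
    · -- higher coordinates
      obtain ⟨hi3, hiK⟩ := hi
      set J : ℕ := i.val - 3 with hJdef
      have hJK : J < K := by omega
      have hiJ : i.val = J + 3 := by omega
      have hs1 : pyrG K γ (J + 1) < 1 := by
        have := pyrG_mono (γ := γ) hγ0 hγ1 hγmono (J + 1) (K + 1) (by omega) (by omega)
        rwa [pyrG_last] at this
      have hvt : vn (K + 3) = (1 - pyrG K γ (J + 1)) ^ 3 := by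
        simp only [hvn]; rw [dif_pos (by omega : K + 3 < K + 4)]; exact pyrVert_top_hi hJK i hiJ
      have hPJ := pyrP_eq (γ := γ) (x := x) hγ0 hγ1 hγmono hx1 (K - (J + 1)) (J + 1)
        (by omega)
      rw [pyrP] at hPJ
      have hknot : ∑ q ∈ Finset.range K, pyrW K γ x (q + 3) * vn (q + 3)
          = (pyrF K γ x (J + 1) + pyrM K γ x K * (1 - pyrG K γ (J + 1)))
              * (1 - pyrG K γ (J + 1)) ^ 2 := by
        have hsplit : ∑ q ∈ Finset.range K, pyrW K γ x (q + 3) * vn (q + 3)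
            = ∑ q ∈ Finset.Ico (J + 1) K,
                ((pyrM K γ x (q + 1) - pyrM K γ x q) * (pyrG K γ (q + 1) - pyrG K γ (J + 1)))
                  * (1 - pyrG K γ (J + 1)) ^ 2 := by
          rw [Finset.range_eq_Ico,
            ← Finset.sum_Ico_consecutive _ (Nat.zero_le (J + 1)) (by omega : J + 1 ≤ K)]
          have hzero : ∑ q ∈ Finset.Ico 0 (J + 1), pyrW K γ x (q + 3) * vn (q + 3) = 0 := by
            apply Finset.sum_eq_zero
            intro q hq
            have hqJ : q < J + 1 := (Finset.mem_Ico.1 hq).2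
            have hqK : q < K := by omega
            simp only [hvn]
            rw [dif_pos (by omega : q + 3 < K + 4), pyrVert_knot_hi hqK hJK i hiJ,
              if_neg (by omega)]
            ring
          rw [hzero, zero_add]
          apply Finset.sum_congr rfl
          intro q hq
          have hqJ : J + 1 ≤ q := (Finset.mem_Ico.1 hq).1
          have hqK : q < K := (Finset.mem_Ico.1 hq).2
          rw [pyrW_knot hqK]; simp only [hvn]
          rw [dif_pos (by omega : q + 3 < K + 4), pyrVert_knot_hi hqK hJK i hiJ,
            if_pos (by omega)]
          ring
        rw [hsplit, ← Finset.sum_mul]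
        have : ∑ q ∈ Finset.Ico (J + 1) K,
            (pyrM K γ x (q + 1) - pyrM K γ x q) * (pyrG K γ (q + 1) - pyrG K γ (J + 1))
            = pyrF K γ x (J + 1) + pyrM K γ x K * (1 - pyrG K γ (J + 1)) := by linarith
        rw [this]
      rw [hv0, hv1, hv2, hvt, hknot, if_neg (by omega), if_neg (by omega), if_neg (by omega),
        pyrW_0, pyrW_1, pyrW_2, pyrW_top, pyrCurve_hi hJK i hiJ]
      have hF : pyrF K γ x (J + 1) * (1 - pyrG K γ (J + 1)) ^ 2
          = (max (x - pyrG K γ (J + 1)) 0) ^ 3 := by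
        rw [pyrF]
        apply div_mul_cancel₀
        have : (0:ℝ) < 1 - pyrG K γ (J + 1) := by linarith
        positivity
      nlinarith [hF]
  -- conclude
  have hws : (0:ℝ) < ∑ p : Fin (K + 4), w p := by rw [hsum1]; norm_num
  have := Finset.centerMass_mem_convexHull (Finset.univ : Finset (Fin (K + 4)))
    (fun p _ => pyrW_nonneg hγ0 hγ1 hγmono hx0 hx1 p.val p.isLt) hws
    (fun p _ => Set.mem_range_self (f := pyrVert K γ) p)
  rwa [Finset.centerMass, hsum1, inv_one, one_smul, hcm] at this
end

section
/- The K+4 points v₁, ..., v_{K+4} are affinely independent in ℝ^{K+3}; in particular, their convex hull is a (K+3)-dimensional simplex. -/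
open Matrix
set_option maxHeartbeats 1600000


/-- The matrix whose `(i, p)` entry is the `i`-th coordinate of `v_{p+2}`. -/
noncomputable def pyrMat (K : ℕ) (γ : Fin K → ℝ) : Matrix (Fin (K + 3)) (Fin (K + 3)) ℝ :=
  Matrix.of fun i p => pyrVert K γ p.succ i

lemma pyrMat_blockTriangular (K : ℕ) (γ : Fin K → ℝ) :
    (pyrMat K γ).BlockTriangular id := by
  intro i p h
  simp only [id_eq] at h
  have hp : (p.succ : Fin (K + 4)).val = p.val + 1 := rfl
  have hi3 : i.val < K + 3 := i.isLt
  have hp3 : p.val < K + 3 := p.isLt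
  simp only [pyrMat, Matrix.of_apply, pyrVert, hp]
  have hlt : p.val < i.val := h
  split_ifs with h1 h2 h3 h4 h5 h6 h7 h8 <;> first | rfl | omega

lemma pyrMat_diag_pos (K : ℕ) (γ : Fin K → ℝ)
    (hγ0 : ∀ k, 0 < γ k) (hγ1 : ∀ k, γ k < 1) (hγmono : StrictMono γ)
    (p : Fin (K + 3)) : 0 < pyrMat K γ p p := by
  have hp : (p.succ : Fin (K + 4)).val = p.val + 1 := rfl
  have hp3 : p.val < K + 3 := p.isLt
  simp only [pyrMat, Matrix.of_apply, pyrVert, hp]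
  split_ifs <;>
    first
    | exact ‹False›.elim
    | omega
    | (norm_num; done)
    | exact hγ0 _
    | exact pow_pos (sub_pos.2 (hγ1 _)) 3
    | exact mul_pos (sub_pos.2 (hγmono (Fin.mk_lt_mk.2 (by omega)))) (pow_pos (sub_pos.2 (hγ1 _)) 2)

/-- The `K+4` points `v₁, …, v_{K+4}` are affinely independent in `ℝ^{K+3}`. -/
theorem verts_affineIndependent (K : ℕ) (γ : Fin K → ℝ)
    (hγ0 : ∀ k, 0 < γ k) (hγ1 : ∀ k, γ k < 1) (hγmono : StrictMono γ) :
    AffineIndependent ℝ (pyrVert K γ) := by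
  have h0 : pyrVert K γ 0 = 0 := by
    funext i
    simp [pyrVert]
  have hdet : (pyrMat K γ).det ≠ 0 := by
    rw [Matrix.det_of_upperTriangular (pyrMat_blockTriangular K γ)]
    exact ne_of_gt (Finset.prod_pos fun p _ => pyrMat_diag_pos K γ hγ0 hγ1 hγmono p)
  have hunit : IsUnit (pyrMat K γ) :=
    (Matrix.isUnit_iff_isUnit_det _).2 (isUnit_iff_ne_zero.2 hdet)
  have hli : LinearIndependent ℝ (fun p : Fin (K + 3) => (pyrMat K γ)ᵀ p) :=
    Matrix.linearIndependent_cols_iff_isUnit.2 hunit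
  -- the columns of pyrMat are exactly the vertices v_{p+2}
  have hcols : (fun p : Fin (K + 3) => (pyrMat K γ)ᵀ p)
      = fun p : Fin (K + 3) => pyrVert K γ p.succ := rfl
  rw [hcols] at hli
  rw [affineIndependent_iff_linearIndependent_vsub ℝ _ (0 : Fin (K + 4))]
  have : (fun j : {x : Fin (K + 4) // x ≠ 0} => pyrVert K γ j -ᵥ pyrVert K γ 0)
      = (fun p : Fin (K + 3) => pyrVert K γ p.succ) ∘
        (fun j : {x : Fin (K + 4) // x ≠ 0} => Fin.pred j.val j.prop) := by
    funext j
    simp only [Function.comp_apply, Fin.succ_pred, h0, vsub_eq_sub, sub_zero]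
  rw [this]
  apply hli.comp
  intro a b hab
  have : (a : Fin (K + 4)) = b := by
    have := congrArg Fin.succ hab
    simpa [Fin.succ_pred] using this
  exact Subtype.ext this
end

section
/- Let a₀, a₁, a₂, a₃, η₁, ..., η_K and b₀, b₁, b₂, b₃, ζ₁, ..., ζ_K be real numbers, and define cubic spline functions f(x) = a₀ + a₁x + a₂x² + a₃x³ + Σ_{k=1}^K η_k((x−γ_k)₊)³ and g(x) = b₀ + b₁x + b₂x² + b₃x³ + Σ_{k=1}^K ζ_k((x−γ_k)₊)³. Define the affine maps F, G : ℝ^{K+3} → ℝ by F(w) = a₀ + a₁w₁ + a₂w₂ + a₃w₃ + Σ_{k=1}^K η_k w_{3+k} and G(w) = b₀ + b₁w₁ + b₂w₂ + b₃w₃ + Σ_{k=1}^K ζ_k w_{3+k}, so that f(x) = F(c(x)) and g(x) = G(c(x)) for x ∈ [0,1]. If F(vᵢ) ≤ G(vᵢ) for every i = 1, ..., K+4, then f(x) ≤ g(x) for every x ∈ [0,1]; in particular, quantile spline curves whose values are ordered at the K+4 vertices do not cross on [0,1]. -/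
set_option maxHeartbeats 1000000 in
lemma pyr_secant (x a b c : ℝ) (hx0 : 0 ≤ x) (hx1 : x ≤ 1) (ha : 0 ≤ a)
    (hab : a < b) (hbc : b < c) (hc : c ≤ 1) :
    ((max (x-b) 0)^3/(1-b)^2 - (max (x-a) 0)^3/(1-a)^2) * (c-b)
      ≤ ((max (x-c) 0)^3/(1-c)^2 - (max (x-b) 0)^3/(1-b)^2) * (b-a) := by
  have hb1 : b < 1 := lt_of_lt_of_le hbc hc
  have ha1 : a < 1 := hab.trans hb1
  have ha2 : (0:ℝ) < (1-a)^2 := pow_pos (by linarith) 2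
  have hb2 : (0:ℝ) < (1-b)^2 := pow_pos (by linarith) 2
  rcases eq_or_lt_of_le hc with hc1 | hc1
  · -- c = 1
    subst hc1
    have hPc : max (x-1) 0 = 0 := max_eq_right (by linarith)
    rw [hPc]
    have h0 : (0:ℝ)^3/(1-1)^2 = 0 := by norm_num
    rw [h0]
    have key : max (x-b) 0 * (1-a) ≤ max (x-a) 0 * (1-b) := by
      rcases le_or_gt x b with hxb | hxb
      · rw [max_eq_right (by linarith)]
        have : (0:ℝ) ≤ max (x-a) 0 := le_max_right _ _
        nlinarith
      · rw [max_eq_left (by linarith), max_eq_left (by linarith)]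
        nlinarith
    have key3 : (max (x-b) 0 * (1-a))^3 ≤ (max (x-a) 0 * (1-b))^3 :=
      pow_le_pow_left₀ (mul_nonneg (le_max_right _ _) (by linarith)) key 3
    have h : (max (x-b) 0)^3/(1-b)^2 * (1-a) ≤ (max (x-a) 0)^3/(1-a)^2 * (1-b) := by
      rw [div_mul_eq_mul_div, div_mul_eq_mul_div, div_le_div_iff₀ hb2 ha2]
      calc (max (x-b) 0)^3 * (1-a) * (1-a)^2 = (max (x-b) 0 * (1-a))^3 := by ring
        _ ≤ (max (x-a) 0 * (1-b))^3 := key3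
        _ = (max (x-a) 0)^3 * (1-b) * (1-b)^2 := by ring
    linarith
  · -- c < 1
    have hc2 : (0:ℝ) < (1-c)^2 := pow_pos (by linarith) 2
    have hane : (1:ℝ) - a ≠ 0 := ne_of_gt (by linarith)
    have hbne : (1:ℝ) - b ≠ 0 := ne_of_gt (by linarith)
    have hcne : (1:ℝ) - c ≠ 0 := ne_of_gt (by linarith)
    set Pa := (max (x-a) 0)^3 with hPa
    set Pb := (max (x-b) 0)^3 with hPb
    set Pc := (max (x-c) 0)^3 with hPc
    have hPa0 : 0 ≤ Pa := pow_nonneg (le_max_right _ _) 3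
    have hPb0 : 0 ≤ Pb := pow_nonneg (le_max_right _ _) 3
    have hPc0 : 0 ≤ Pc := pow_nonneg (le_max_right _ _) 3
    have key : (Pb*(1-a)^2*(1-c)^2 - Pa*(1-b)^2*(1-c)^2)*(c-b)
        ≤ (Pc*(1-a)^2*(1-b)^2 - Pb*(1-a)^2*(1-c)^2)*(b-a) := by
      rcases le_or_gt x b with hxb | hxb
      · have hb : Pb = 0 := by rw [hPb, max_eq_right (by linarith)]; ring
        have hcc : Pc = 0 := by rw [hPc, max_eq_right (by linarith)]; ring
        rw [hb, hcc]
        have h1 : 0 ≤ Pa*(1-b)^2*(1-c)^2*(c-b) :=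
          mul_nonneg (mul_nonneg (mul_nonneg hPa0 hb2.le) hc2.le) (by linarith)
        linarith
      · have hb : Pb = (x-b)^3 := by rw [hPb, max_eq_left (by linarith)]
        have haa : Pa = (x-a)^3 := by rw [hPa, max_eq_left (by linarith)]
        rcases le_or_gt x c with hxc | hxc
        · -- middle case
          have hcc : Pc = 0 := by rw [hPc, max_eq_right (by linarith)]; ring
          have hA : (x-b)*(1-a) ≤ (x-a)*(1-b) := by nlinarith
          have hA0 : (0:ℝ) ≤ (x-b)*(1-a) := mul_nonneg (by linarith) (by linarith)
          have h3 : ((x-b)*(1-a))^3 ≤ ((x-a)*(1-b))^3 := pow_le_pow_left₀ hA0 hA 3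
          have h2 : ((x-b)*(1-a))^2 ≤ ((x-a)*(1-b))^2 := pow_le_pow_left₀ hA0 hA 2
          have hxb3 : (0:ℝ) ≤ (x-b)^3*(1-a)^2 :=
            mul_nonneg (pow_nonneg (by linarith) 3) (sq_nonneg _)
          have hbr1 : (x-b)^3*(1-a)^2 ≤ (x-a)^3*(1-b)^2 := by
            have e1 : (x-b)^3*(1-a)^2*(1-b) ≤ (x-b)^3*(1-a)^2*(1-a) := by
              have := mul_nonneg hxb3 (by linarith : (0:ℝ) ≤ b - a)
              linarith
            have e2 : (x-b)^3*(1-a)^2*(1-a) ≤ (x-a)^3*(1-b)^2*(1-b) := by linarith [h3]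
            exact le_of_mul_le_mul_right (by linarith) (by linarith : (0:ℝ) < 1-b)
          have hbr2 : (x-b)^2*(1-a)^2 ≤ (x-a)^2*(1-b)^2 := by linarith [h2]
          have core : (x-b)^3*(1-a)^2*(c-a) ≤ (x-a)^3*(1-b)^2*(c-b) := by
            have t1 := mul_nonneg (by linarith : (0:ℝ) ≤ c - x) (sub_nonneg.2 hbr1)
            have t2 := mul_nonneg (mul_nonneg (by linarith : (0:ℝ) ≤ x-a)
              (by linarith : (0:ℝ) ≤ x-b)) (sub_nonneg.2 hbr2)
            linarith [t1, t2]
          rw [hb, haa, hcc]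
          have := mul_nonneg hc2.le (sub_nonneg.2 core)
          linarith [this]
        · -- full case
          have hcc : Pc = (x-c)^3 := by rw [hPc, max_eq_left (by linarith)]
          rw [hb, haa, hcc]
          have hR : 0 ≤ (1-a)*(1-b)*(x-c) + (1-b)*(1-c)*(x-a) + (1-c)*(1-a)*(x-b) := by
            have h1 : 0 ≤ (1-a)*(1-b)*(x-c) :=
              mul_nonneg (mul_nonneg (by linarith) (by linarith)) (by linarith)
            have h2 : 0 ≤ (1-b)*(1-c)*(x-a) :=
              mul_nonneg (mul_nonneg (by linarith) (by linarith)) (by linarith)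
            have h3 : 0 ≤ (1-c)*(1-a)*(x-b) :=
              mul_nonneg (mul_nonneg (by linarith) (by linarith)) (by linarith)
            linarith
          have hfact : 0 ≤ (1-x)^2*(b-a)*(c-b)*(c-a)*((1-a)*(1-b)*(x-c) + (1-b)*(1-c)*(x-a) + (1-c)*(1-a)*(x-b)) := by
            apply mul_nonneg _ hR
            apply mul_nonneg (mul_nonneg (mul_nonneg (sq_nonneg _) (by linarith)) (by linarith)) (by linarith)
          linarith [hfact]
    have hD : (0:ℝ) < (1-a)^2*(1-b)^2*(1-c)^2 := by positivity
    rw [← mul_le_mul_iff_of_pos_right hD]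
    calc (Pb/(1-b)^2 - Pa/(1-a)^2) * (c-b) * ((1-a)^2*(1-b)^2*(1-c)^2)
        = (Pb*(1-a)^2*(1-c)^2 - Pa*(1-b)^2*(1-c)^2)*(c-b) := by field_simp
      _ ≤ (Pc*(1-a)^2*(1-b)^2 - Pb*(1-a)^2*(1-c)^2)*(b-a) := key
      _ = (Pc/(1-c)^2 - Pb/(1-b)^2) * (b-a) * ((1-a)^2*(1-b)^2*(1-c)^2) := by field_simp

open Finset

lemma pyr_tangent (x t : ℝ) (hx0 : 0 ≤ x) (hx1 : x ≤ 1) (ht0 : 0 < t) (ht1 : t ≤ 1) :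
    x^3 - (3*x^2 - 2*x^3)*t ≤ (max (x-t) 0)^3/(1-t)^2 := by
  rcases le_or_gt x t with hxt | hxt
  · have h1 : (0:ℝ) ≤ (max (x-t) 0)^3/(1-t)^2 := by positivity
    have h2 : x^3 - (3*x^2 - 2*x^3)*t ≤ 0 := by
      have u1 : 0 ≤ x^2*(3-2*x)*(t-x) :=
        mul_nonneg (mul_nonneg (sq_nonneg x) (by linarith)) (by linarith)
      have u2 : 0 ≤ 2*(x*x*x)*(1-x) :=
        mul_nonneg (by positivity) (by linarith)
      nlinarith [u1, u2]
    linarith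
  · have ht1' : t < 1 := lt_of_lt_of_le hxt hx1
    rw [max_eq_left (by linarith), le_div_iff₀ (pow_pos (by linarith) 2)]
    nlinarith [sq_nonneg (x-t), sq_nonneg t, mul_nonneg ht0.le (sub_nonneg.2 hxt.le),
      sq_nonneg (x*t - t), mul_pos ht0 (sub_pos.2 hxt), sq_nonneg x,
      mul_nonneg (mul_nonneg ht0.le ht0.le) (sub_nonneg.2 hx1)]

noncomputable def pyrNode (K : ℕ) (γ : Fin K → ℝ) (j : ℕ) : ℝ :=
  if h : 0 < j ∧ j ≤ K then γ ⟨j - 1, by omega⟩ else if j = 0 then 0 else 1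

noncomputable def pyrPhi (K : ℕ) (γ : Fin K → ℝ) (x : ℝ) (j : ℕ) : ℝ :=
  (max (x - pyrNode K γ j) 0) ^ 3 / (1 - pyrNode K γ j) ^ 2

noncomputable def pyrSlope (K : ℕ) (γ : Fin K → ℝ) (x : ℝ) (j : ℕ) : ℝ :=
  (pyrPhi K γ x (j+1) - pyrPhi K γ x j) / (pyrNode K γ (j+1) - pyrNode K γ j)

noncomputable def pyrLam (K : ℕ) (γ : Fin K → ℝ) (x : ℝ) (p : ℕ) : ℝ :=
  if p = 0 then (1-x)^2
  else if p = 1 then 2*x*(1-x)^2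
  else if p = 2 then 3*x^2 - 2*x^3 + pyrSlope K γ x 0
  else if p = K + 3 then -(pyrSlope K γ x K)
  else pyrSlope K γ x (p-2) - pyrSlope K γ x (p-3)

lemma pyrNode_zero {K : ℕ} {γ : Fin K → ℝ} : pyrNode K γ 0 = 0 := by simp [pyrNode]

lemma pyrNode_knot {K : ℕ} {γ : Fin K → ℝ} {j : ℕ} (h0 : 0 < j) (hK : j ≤ K) :
    pyrNode K γ j = γ ⟨j - 1, by omega⟩ := by
  rw [pyrNode, dif_pos ⟨h0, hK⟩]

lemma pyrNode_one {K : ℕ} {γ : Fin K → ℝ} {j : ℕ} (h : K + 1 ≤ j) : pyrNode K γ j = 1 := by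
  rw [pyrNode, dif_neg (by omega), if_neg (by omega)]

lemma pyrNode_nonneg {K : ℕ} {γ : Fin K → ℝ} (hγ0 : ∀ k, 0 < γ k) (j : ℕ) :
    0 ≤ pyrNode K γ j := by
  rw [pyrNode]; split_ifs with h1 h2
  · exact (hγ0 _).le
  · exact le_refl _
  · norm_num

lemma pyrNode_le_one {K : ℕ} {γ : Fin K → ℝ} (hγ1 : ∀ k, γ k < 1) (j : ℕ) :
    pyrNode K γ j ≤ 1 := by
  rw [pyrNode]; split_ifs with h1 h2
  · exact (hγ1 _).le
  · norm_num
  · exact le_refl _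

lemma pyrNode_lt {K : ℕ} {γ : Fin K → ℝ} (hγ0 : ∀ k, 0 < γ k) (hγ1 : ∀ k, γ k < 1)
    (hγmono : StrictMono γ) (j : ℕ) (hj : j ≤ K) :
    pyrNode K γ j < pyrNode K γ (j+1) := by
  rcases Nat.eq_zero_or_pos j with rfl | hj0
  · rw [pyrNode_zero]
    rcases Nat.eq_zero_or_pos K with rfl | hK0
    · rw [pyrNode_one (by omega)]; norm_num
    · rw [pyrNode_knot (by omega) (by omega)]; exact hγ0 _
  · rcases eq_or_lt_of_le hj with rfl | hjK
    · rw [pyrNode_knot hj0 le_rfl, pyrNode_one (by omega)]; exact hγ1 _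
    · rw [pyrNode_knot hj0 (by omega), pyrNode_knot (by omega) (by omega)]
      exact hγmono (by simp [Fin.lt_def]; omega)

section main
variable {K : ℕ} {γ : Fin K → ℝ} {x : ℝ}

lemma pyrPhi_nonneg (j : ℕ) : 0 ≤ pyrPhi K γ x j :=
  div_nonneg (pow_nonneg (le_max_right _ _) 3) (sq_nonneg _)

lemma pyrPhi_zero (hx0 : 0 ≤ x) : pyrPhi K γ x 0 = x^3 := by
  rw [pyrPhi, pyrNode_zero, max_eq_left (by linarith)]
  norm_num

lemma pyrPhi_last (hx1 : x ≤ 1) {j : ℕ} (h : K + 1 ≤ j) : pyrPhi K γ x j = 0 := by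
  rw [pyrPhi, pyrNode_one h, max_eq_right (by linarith)]
  norm_num

lemma pyrSlope_mul (hγ0 : ∀ k, 0 < γ k) (hγ1 : ∀ k, γ k < 1) (hγmono : StrictMono γ)
    {j : ℕ} (hj : j ≤ K) :
    pyrSlope K γ x j * (pyrNode K γ (j+1) - pyrNode K γ j) = pyrPhi K γ x (j+1) - pyrPhi K γ x j :=
  div_mul_cancel₀ _ (ne_of_gt (sub_pos.2 (pyrNode_lt hγ0 hγ1 hγmono j hj)))

end main

section main2
variable {K : ℕ} {γ : Fin K → ℝ} {x : ℝ}
  (hγ0 : ∀ k, 0 < γ k) (hγ1 : ∀ k, γ k < 1) (hγmono : StrictMono γ)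
  (hx0 : 0 ≤ x) (hx1 : x ≤ 1)

include hγ0 hγ1 hγmono hx0 hx1

lemma pyrLam_nonneg (p : ℕ) (hp : p < K + 4) : 0 ≤ pyrLam K γ x p := by
  rw [pyrLam]
  split_ifs with h0 h1 h2 h3
  · positivity
  · have : (0:ℝ) ≤ (1-x)^2 := sq_nonneg _
    nlinarith
  · -- 3x²-2x³ + slope 0
    have ht1 : 0 < pyrNode K γ 1 := by
      have := pyrNode_lt hγ0 hγ1 hγmono 0 (by omega)
      rwa [pyrNode_zero] at this
    have ht1' : pyrNode K γ 1 ≤ 1 := pyrNode_le_one hγ1 1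
    have htan := pyr_tangent x (pyrNode K γ 1) hx0 hx1 ht1 ht1'
    have hΦ0 : pyrPhi K γ x 0 = x^3 := pyrPhi_zero hx0
    have hd : x^3 - (3*x^2-2*x^3)*pyrNode K γ 1 ≤ pyrPhi K γ x 1 := by
      simpa [pyrPhi] using htan
    have hq : -(3*x^2-2*x^3) ≤ (pyrPhi K γ x 1 - x^3)/(pyrNode K γ 1) := by
      rw [le_div_iff₀ ht1]; nlinarith [hd]
    rw [pyrSlope, hΦ0, pyrNode_zero, sub_zero]
    linarith
  · -- p = K+3 : -(slope K)
    have hpos : 0 < pyrNode K γ (K+1) - pyrNode K γ K := sub_pos.2 (pyrNode_lt hγ0 hγ1 hγmono K le_rfl)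
    have hΦ : pyrPhi K γ x (K+1) = 0 := pyrPhi_last hx1 (by omega)
    rw [pyrSlope, hΦ, zero_sub, neg_nonneg]
    exact div_nonpos_of_nonpos_of_nonneg (by simp [pyrPhi_nonneg]) hpos.le
  · -- 3 ≤ p ≤ K+2
    obtain ⟨j, rfl⟩ : ∃ j, p = j + 3 := ⟨p - 3, by omega⟩
    have hjK : j + 1 ≤ K := by omega
    have e2 : j + 3 - 2 = j + 1 := by omega
    have e3 : j + 3 - 3 = j := by omega
    rw [e2, e3, sub_nonneg]
    have ha : pyrNode K γ j < pyrNode K γ (j+1) := pyrNode_lt hγ0 hγ1 hγmono j (by omega)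
    have hb : pyrNode K γ (j+1) < pyrNode K γ (j+2) := pyrNode_lt hγ0 hγ1 hγmono (j+1) hjK
    rw [pyrSlope, pyrSlope, div_le_div_iff₀ (by linarith) (by linarith)]
    have hsec := pyr_secant x (pyrNode K γ j) (pyrNode K γ (j+1)) (pyrNode K γ (j+2))
      hx0 hx1 (pyrNode_nonneg hγ0 j) ha hb (pyrNode_le_one hγ1 (j+2))
    simpa [pyrPhi] using hsec

end main2

section sums
variable {K : ℕ} {γ : Fin K → ℝ} {x : ℝ}

lemma pyrLam_two : pyrLam K γ x 2 = 3*x^2 - 2*x^3 + pyrSlope K γ x 0 := by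
  rw [pyrLam]; norm_num

lemma pyrLam_mid {j : ℕ} (hj : j < K) :
    pyrLam K γ x (j + 3) = pyrSlope K γ x (j+1) - pyrSlope K γ x j := by
  rw [pyrLam, if_neg (by omega), if_neg (by omega), if_neg (by omega), if_neg (by omega)]
  congr 1 <;> congr 1 <;> omega

lemma pyrLam_top : pyrLam K γ x (K + 3) = -(pyrSlope K γ x K) := by
  rw [pyrLam, if_neg (by omega), if_neg (by omega), if_neg (by omega), if_pos rfl]

variable (hγ0 : ∀ k, 0 < γ k) (hγ1 : ∀ k, γ k < 1) (hγmono : StrictMono γ)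
  (hx0 : 0 ≤ x) (hx1 : x ≤ 1)

include hγ0 hγ1 hγmono hx0 hx1

lemma pyrS0 : ∑ j ∈ Finset.range (K+2), pyrLam K γ x (j+2) = 3*x^2 - 2*x^3 := by
  rw [Finset.sum_range_succ' (fun j => pyrLam K γ x (j+2)) (K+1)]
  rw [Finset.sum_range_succ]
  have hmid : ∑ j ∈ Finset.range K, pyrLam K γ x (j+1+2)
      = pyrSlope K γ x K - pyrSlope K γ x 0 := by
    rw [Finset.sum_congr rfl (fun j hj => by
      rw [show j+1+2 = j+3 from rfl, pyrLam_mid (Finset.mem_range.1 hj)])]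
    exact Finset.sum_range_sub (fun j => pyrSlope K γ x j) K
  rw [hmid, show K+1+2 = K+3 from rfl, pyrLam_top, pyrLam_two]
  ring

lemma pyrS1 : ∑ j ∈ Finset.range (K+2), pyrLam K γ x (j+2) * pyrNode K γ j = x^3 := by
  rw [Finset.sum_range_succ' (fun j => pyrLam K γ x (j+2) * pyrNode K γ j) (K+1)]
  rw [Finset.sum_range_succ]
  have hmid : ∑ j ∈ Finset.range K, pyrLam K γ x (j+1+2) * pyrNode K γ (j+1)
      = (pyrSlope K γ x K * pyrNode K γ K - pyrPhi K γ x K)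
        - (pyrSlope K γ x 0 * pyrNode K γ 0 - pyrPhi K γ x 0) := by
    have step : ∀ j ∈ Finset.range K, pyrLam K γ x (j+1+2) * pyrNode K γ (j+1)
        = (fun j => pyrSlope K γ x j * pyrNode K γ j - pyrPhi K γ x j) (j+1)
          - (fun j => pyrSlope K γ x j * pyrNode K γ j - pyrPhi K γ x j) j := by
      intro j hj
      have hjK : j < K := Finset.mem_range.1 hj
      have hsm := pyrSlope_mul (x := x) hγ0 hγ1 hγmono (le_of_lt hjK)
      rw [show j+1+2 = j+3 from rfl, pyrLam_mid hjK]
      simp only []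
      nlinarith [hsm]
    rw [Finset.sum_congr rfl step,
      Finset.sum_range_sub (fun j => pyrSlope K γ x j * pyrNode K γ j - pyrPhi K γ x j) K]
  rw [hmid, show K+1+2 = K+3 from rfl, pyrLam_top, pyrNode_zero, pyrNode_one (le_refl (K+1)),
    pyrPhi_zero hx0]
  have hsK := pyrSlope_mul (x := x) hγ0 hγ1 hγmono (le_refl K)
  rw [pyrNode_one (le_refl (K+1)), pyrPhi_last hx1 (le_refl (K+1))] at hsK
  nlinarith [hsK]

lemma pyrS2 {J : ℕ} (hJ1 : 1 ≤ J) (hJK : J ≤ K) :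
    ∑ j ∈ Finset.range (K+2), pyrLam K γ x (j+2) *
      (if J < j then pyrNode K γ j - pyrNode K γ J else 0) = pyrPhi K γ x J := by
  rw [Finset.range_eq_Ico, ← Finset.sum_Ico_consecutive _ (by omega : 0 ≤ J+1) (by omega : J+1 ≤ K+2)]
  have hfirst : ∑ j ∈ Finset.Ico 0 (J+1), pyrLam K γ x (j+2) *
      (if J < j then pyrNode K γ j - pyrNode K γ J else 0) = 0 := by
    apply Finset.sum_eq_zero
    intro j hj
    rw [if_neg (by simp at hj; omega), mul_zero]
  rw [hfirst, zero_add, Finset.sum_Ico_succ_top (by omega : J+1 ≤ K+1)]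
  have htop : pyrLam K γ x (K+1+2) * (if J < K+1 then pyrNode K γ (K+1) - pyrNode K γ J else 0)
      = -(pyrSlope K γ x K) * (1 - pyrNode K γ J) := by
    rw [if_pos (by omega), show K+1+2 = K+3 from rfl, pyrLam_top, pyrNode_one (le_refl (K+1))]
  have hmid : ∑ j ∈ Finset.Ico (J+1) (K+1), pyrLam K γ x (j+2) *
      (if J < j then pyrNode K γ j - pyrNode K γ J else 0)
      = (pyrSlope K γ x K * (pyrNode K γ K - pyrNode K γ J) - pyrPhi K γ x K)
        - (pyrSlope K γ x J * (pyrNode K γ J - pyrNode K γ J) - pyrPhi K γ x J) := by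
    rw [Finset.sum_Ico_eq_sum_range]
    have hKJ : K + 1 - (J+1) = K - J := by omega
    rw [hKJ]
    have hcongr : ∀ i ∈ Finset.range (K-J), pyrLam K γ x (J+1+i+2) *
        (if J < J+1+i then pyrNode K γ (J+1+i) - pyrNode K γ J else 0)
        = (fun i => pyrSlope K γ x (J+i) * (pyrNode K γ (J+i) - pyrNode K γ J) - pyrPhi K γ x (J+i)) (i+1)
          - (fun i => pyrSlope K γ x (J+i) * (pyrNode K γ (J+i) - pyrNode K γ J) - pyrPhi K γ x (J+i)) i := by
      intro i hi
      have hiK : i < K - J := Finset.mem_range.1 hi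
      have e1 : J+1+i+2 = (J+i)+3 := by omega
      have e2 : J+1+i = (J+i)+1 := by omega
      have hsm := pyrSlope_mul (x := x) hγ0 hγ1 hγmono (by omega : J+i ≤ K)
      rw [e1, e2, pyrLam_mid (by omega : J+i < K), if_pos (by omega)]
      simp only []
      have e4 : J + (i+1) = J + i + 1 := by omega
      rw [e4]
      nlinarith [hsm]
    rw [Finset.sum_congr rfl hcongr,
      Finset.sum_range_sub (fun i => pyrSlope K γ x (J+i) * (pyrNode K γ (J+i) - pyrNode K γ J) - pyrPhi K γ x (J+i)) (K-J)]
    have e3 : J + (K - J) = K := by omega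
    rw [e3, Nat.add_zero]
  rw [hmid, htop]
  have hsK := pyrSlope_mul (x := x) hγ0 hγ1 hγmono (le_refl K)
  rw [pyrNode_one (le_refl (K+1)), pyrPhi_last hx1 (le_refl (K+1))] at hsK
  nlinarith [hsK]

end sums

section verts
variable {K : ℕ} {γ : Fin K → ℝ}

lemma pyrVert_p0 (i : Fin (K+3)) : pyrVert K γ ⟨0, by omega⟩ i = 0 := by
  rw [pyrVert]; simp

lemma pyrVert_p1 (i : Fin (K+3)) :
    pyrVert K γ ⟨1, by omega⟩ i = if i.val = 0 then 1/2 else 0 := by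
  rw [pyrVert]; norm_num

lemma pyrVert_c0 {j : ℕ} (hj : j < K+2) :
    pyrVert K γ ⟨j+2, by omega⟩ ⟨0, by omega⟩ = (2 + pyrNode K γ j)/3 := by
  rcases Nat.eq_zero_or_pos j with rfl | hj0
  · rw [pyrVert, pyrNode_zero]; norm_num
  · rcases eq_or_lt_of_le (by omega : j ≤ K+1) with rfl | hjK
    · rw [pyrVert, pyrNode_one (le_refl (K+1))]
      have h1 : ¬(K+1+2 = 0) := by omega
      have h2 : ¬(K+1+2 = 1) := by omega
      have h3 : ¬(K+1+2 = 2) := by omega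
      have h4 : K+1+2 = K+3 := by omega
      simp only [dif_neg h1, dif_neg h2, dif_neg h3, dif_pos h4]
      norm_num
    · rw [pyrVert, pyrNode_knot hj0 (by omega)]
      have h1 : ¬(j+2 = 0) := by omega
      have h2 : ¬(j+2 = 1) := by omega
      have h3 : ¬(j+2 = 2) := by omega
      have h4 : ¬(j+2 = K+3) := by omega
      simp only [dif_neg h1, dif_neg h2, dif_neg h3, dif_neg h4, dif_pos rfl]
      congr 2

lemma pyrVert_c1 {j : ℕ} (hj : j < K+2) :
    pyrVert K γ ⟨j+2, by omega⟩ ⟨1, by omega⟩ = (1 + 2*pyrNode K γ j)/3 := by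
  rcases Nat.eq_zero_or_pos j with rfl | hj0
  · rw [pyrVert, pyrNode_zero]; norm_num
  · rcases eq_or_lt_of_le (by omega : j ≤ K+1) with rfl | hjK
    · rw [pyrVert, pyrNode_one (le_refl (K+1))]
      have h1 : ¬(K+1+2 = 0) := by omega
      have h2 : ¬(K+1+2 = 1) := by omega
      have h3 : ¬(K+1+2 = 2) := by omega
      have h4 : K+1+2 = K+3 := by omega
      simp only [dif_neg h1, dif_neg h2, dif_neg h3, dif_pos h4]
      norm_num
    · rw [pyrVert, pyrNode_knot hj0 (by omega)]
      have h1 : ¬(j+2 = 0) := by omega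
      have h2 : ¬(j+2 = 1) := by omega
      have h3 : ¬(j+2 = 2) := by omega
      have h4 : ¬(j+2 = K+3) := by omega
      simp only [dif_neg h1, dif_neg h2, dif_neg h3, dif_neg h4]
      norm_num
      rfl

lemma pyrVert_c2 {j : ℕ} (hj : j < K+2) :
    pyrVert K γ ⟨j+2, by omega⟩ ⟨2, by omega⟩ = pyrNode K γ j := by
  rcases Nat.eq_zero_or_pos j with rfl | hj0
  · rw [pyrVert, pyrNode_zero]; norm_num
  · rcases eq_or_lt_of_le (by omega : j ≤ K+1) with rfl | hjK
    · rw [pyrVert, pyrNode_one (le_refl (K+1))]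
      have h1 : ¬(K+1+2 = 0) := by omega
      have h2 : ¬(K+1+2 = 1) := by omega
      have h3 : ¬(K+1+2 = 2) := by omega
      have h4 : K+1+2 = K+3 := by omega
      simp only [dif_neg h1, dif_neg h2, dif_neg h3, dif_pos h4]
      norm_num
    · rw [pyrVert, pyrNode_knot hj0 (by omega)]
      have h1 : ¬(j+2 = 0) := by omega
      have h2 : ¬(j+2 = 1) := by omega
      have h3 : ¬(j+2 = 2) := by omega
      have h4 : ¬(j+2 = K+3) := by omega
      simp only [dif_neg h1, dif_neg h2, dif_neg h3, dif_neg h4]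
      norm_num
      rfl

lemma pyrVert_c3 {j jj : ℕ} (hj : j < K+2) (hjj : jj < K) :
    pyrVert K γ ⟨j+2, by omega⟩ ⟨jj+3, by omega⟩
      = (if jj+1 < j then pyrNode K γ j - pyrNode K γ (jj+1) else 0)
        * (1 - pyrNode K γ (jj+1))^2 := by
  have hτ : pyrNode K γ (jj+1) = γ ⟨jj, by omega⟩ := pyrNode_knot (by omega) (by omega)
  rcases Nat.eq_zero_or_pos j with rfl | hj0
  · rw [if_neg (by omega : ¬ jj+1 < 0), zero_mul, pyrVert]
    rw [dif_neg (show ¬((⟨0+2, by omega⟩ : Fin (K+4)).val = 0) from by simp),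
      dif_neg (show ¬((⟨0+2, by omega⟩ : Fin (K+4)).val = 1) from by simp),
      dif_pos (show ((⟨0+2, by omega⟩ : Fin (K+4)).val = 2) from rfl),
      if_neg (show ¬((⟨jj+3, by omega⟩ : Fin (K+3)).val = 0) from by simp),
      if_neg (show ¬((⟨jj+3, by omega⟩ : Fin (K+3)).val = 1) from by simp)]
  · rcases eq_or_lt_of_le (by omega : j ≤ K+1) with rfl | hjK
    · rw [pyrVert, hτ, pyrNode_one (le_refl (K+1)), if_pos (by omega : jj+1 < K+1)]
      rw [dif_neg (show ¬((⟨K+1+2, by omega⟩ : Fin (K+4)).val = 0) from by simp),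
        dif_neg (show ¬((⟨K+1+2, by omega⟩ : Fin (K+4)).val = 1) from by simp),
        dif_neg (show ¬((⟨K+1+2, by omega⟩ : Fin (K+4)).val = 2) from by simp),
        dif_pos (show ((⟨K+1+2, by omega⟩ : Fin (K+4)).val = K+3) from by simp),
        dif_neg (show ¬((⟨jj+3, by omega⟩ : Fin (K+3)).val ≤ 2) from by simp)]
      show (1 - γ ⟨jj, hjj⟩)^3 = (1 - γ ⟨jj, hjj⟩) * (1 - γ ⟨jj, hjj⟩)^2
      ring
    · rw [pyrVert, hτ, pyrNode_knot hj0 (by omega)]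
      rw [dif_neg (show ¬((⟨j+2, by omega⟩ : Fin (K+4)).val = 0) from by simp),
        dif_neg (show ¬((⟨j+2, by omega⟩ : Fin (K+4)).val = 1) from by simp),
        dif_neg (show ¬((⟨j+2, by omega⟩ : Fin (K+4)).val = 2) from by simp; omega),
        dif_neg (show ¬((⟨j+2, by omega⟩ : Fin (K+4)).val = K+3) from by simp; omega),
        dif_neg (show ¬((⟨jj+3, by omega⟩ : Fin (K+3)).val = 0) from by simp),
        dif_neg (show ¬((⟨jj+3, by omega⟩ : Fin (K+3)).val = 1) from by simp),
        dif_neg (show ¬((⟨jj+3, by omega⟩ : Fin (K+3)).val = 2) from by simp)]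
      by_cases hlt : jj+1 < j
      · rw [if_pos (show jj+3-3 < j+2-3 from by omega), if_pos hlt]
        rfl
      · rw [if_neg (show ¬(jj+3-3 < j+2-3) from by omega), if_neg hlt, zero_mul]

end verts


section rep
variable {K : ℕ} {γ : Fin K → ℝ} {x : ℝ}

lemma pyr_sum_split (g : Fin (K+4) → ℝ) :
    ∑ p : Fin (K+4), g p
      = g ⟨0, by omega⟩ + g ⟨1, by omega⟩ + ∑ j : Fin (K+2), g ⟨j.val+2, by omega⟩ := by
  have h1 : ∑ p : Fin (K+4), g p
      = ∑ n ∈ Finset.range (K+4), (fun n => if h : n < K+4 then g ⟨n, h⟩ else 0) n := by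
    rw [← Fin.sum_univ_eq_sum_range]
    exact Finset.sum_congr rfl (fun p _ => by rw [dif_pos p.isLt, Fin.eta])
  have h3 : ∑ j : Fin (K+2), g ⟨j.val+2, by omega⟩
      = ∑ n ∈ Finset.range (K+2), (fun n => if h : n+1+1 < K+4 then g ⟨n+1+1, h⟩ else 0) n := by
    rw [← Fin.sum_univ_eq_sum_range]
    refine Finset.sum_congr rfl (fun j _ => ?_)
    rw [dif_pos (by omega : (j:ℕ)+1+1 < K+4)]
    try rfl
  rw [h1, Finset.sum_range_succ' _ (K+3), Finset.sum_range_succ' _ (K+2), h3]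
  simp only []
  rw [dif_pos (by omega : 0 < K+4), dif_pos (by omega : 0+1 < K+4)]
  have e1 : (⟨0+1, by omega⟩ : Fin (K+4)) = ⟨1, by omega⟩ := rfl
  rw [e1]
  try ring

variable (hγ0 : ∀ k, 0 < γ k) (hγ1 : ∀ k, γ k < 1) (hγmono : StrictMono γ)
  (hx0 : 0 ≤ x) (hx1 : x ≤ 1)

include hγ0 hγ1 hγmono hx0 hx1

lemma pyrLam_total : ∑ p : Fin (K+4), pyrLam K γ x p.val = 1 := by
  rw [pyr_sum_split (fun p => pyrLam K γ x p.val)]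
  have h0 : pyrLam K γ x (0:ℕ) = (1-x)^2 := by rw [pyrLam, if_pos rfl]
  have h1 : pyrLam K γ x (1:ℕ) = 2*x*(1-x)^2 := by
    rw [pyrLam, if_neg (by omega), if_pos rfl]
  have hS := pyrS0 (γ := γ) (x := x) hγ0 hγ1 hγmono hx0 hx1
  have hfin : ∑ j : Fin (K+2), pyrLam K γ x ((⟨j.val+2, by omega⟩ : Fin (K+4)) : ℕ)
      = ∑ n ∈ Finset.range (K+2), pyrLam K γ x (n+2) :=
    Fin.sum_univ_eq_sum_range (fun n => pyrLam K γ x (n+2)) (K+2)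
  show pyrLam K γ x 0 + pyrLam K γ x 1 + _ = 1
  rw [hfin, h0, h1, hS]
  ring

lemma pyrRep (i : Fin (K+3)) :
    ∑ p : Fin (K+4), pyrLam K γ x p.val * pyrVert K γ p i = pyrCurve K γ x i := by
  rw [pyr_sum_split (fun p => pyrLam K γ x p.val * pyrVert K γ p i)]
  have h0 : pyrLam K γ x (0:ℕ) = (1-x)^2 := by rw [pyrLam, if_pos rfl]
  have h1 : pyrLam K γ x (1:ℕ) = 2*x*(1-x)^2 := by
    rw [pyrLam, if_neg (by omega), if_pos rfl]
  show pyrLam K γ x 0 * pyrVert K γ ⟨0, by omega⟩ i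
      + pyrLam K γ x 1 * pyrVert K γ ⟨1, by omega⟩ i + _ = _
  rw [pyrVert_p0, pyrVert_p1, mul_zero]
  have hS0 := pyrS0 (γ := γ) (x := x) hγ0 hγ1 hγmono hx0 hx1
  have hS1 := pyrS1 (γ := γ) (x := x) hγ0 hγ1 hγmono hx0 hx1
  obtain ⟨iv, hiv⟩ := i
  by_cases hi0 : iv = 0
  · subst hi0
    rw [if_pos rfl]
    have hc : ∀ j ∈ (Finset.univ : Finset (Fin (K+2))),
        pyrLam K γ x ((⟨j.val+2, by omega⟩ : Fin (K+4)) : ℕ)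
            * pyrVert K γ ⟨j.val+2, by omega⟩ ⟨0, hiv⟩
        = (fun n => (2/3) * pyrLam K γ x (n+2)
            + (1/3) * (pyrLam K γ x (n+2) * pyrNode K γ n)) j.val := by
      intro j _
      show pyrLam K γ x (j.val+2) * pyrVert K γ ⟨j.val+2, by omega⟩ ⟨0, hiv⟩ = _
      rw [pyrVert_c0 (by omega : (j:ℕ) < K+2)]
      simp only []
      ring
    rw [Finset.sum_congr rfl hc, Fin.sum_univ_eq_sum_range
      (fun n => (2/3) * pyrLam K γ x (n+2)
        + (1/3) * (pyrLam K γ x (n+2) * pyrNode K γ n)) (K+2)]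
    rw [Finset.sum_add_distrib, ← Finset.mul_sum, ← Finset.mul_sum, hS0, hS1, h1]
    show _ = pyrCurve K γ x ⟨0, hiv⟩
    rw [pyrCurve, dif_pos rfl]
    ring
  · by_cases hi1 : iv = 1
    · subst hi1
      rw [if_neg (by simp)]
      have hc : ∀ j ∈ (Finset.univ : Finset (Fin (K+2))),
          pyrLam K γ x ((⟨j.val+2, by omega⟩ : Fin (K+4)) : ℕ)
              * pyrVert K γ ⟨j.val+2, by omega⟩ ⟨1, hiv⟩
          = (fun n => (1/3) * pyrLam K γ x (n+2)
              + (2/3) * (pyrLam K γ x (n+2) * pyrNode K γ n)) j.val := by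
        intro j _
        show pyrLam K γ x (j.val+2) * pyrVert K γ ⟨j.val+2, by omega⟩ ⟨1, hiv⟩ = _
        rw [pyrVert_c1 (by omega : (j:ℕ) < K+2)]
        simp only []
        ring
      rw [Finset.sum_congr rfl hc, Fin.sum_univ_eq_sum_range
        (fun n => (1/3) * pyrLam K γ x (n+2)
          + (2/3) * (pyrLam K γ x (n+2) * pyrNode K γ n)) (K+2)]
      rw [Finset.sum_add_distrib, ← Finset.mul_sum, ← Finset.mul_sum, hS0, hS1]
      show _ = pyrCurve K γ x ⟨1, hiv⟩
      rw [pyrCurve, dif_neg (by simp), dif_pos rfl]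
      ring
    · by_cases hi2 : iv = 2
      · subst hi2
        rw [if_neg (by simp)]
        have hc : ∀ j ∈ (Finset.univ : Finset (Fin (K+2))),
            pyrLam K γ x ((⟨j.val+2, by omega⟩ : Fin (K+4)) : ℕ)
                * pyrVert K γ ⟨j.val+2, by omega⟩ ⟨2, hiv⟩
            = (fun n => pyrLam K γ x (n+2) * pyrNode K γ n) j.val := by
          intro j _
          show pyrLam K γ x (j.val+2) * pyrVert K γ ⟨j.val+2, by omega⟩ ⟨2, hiv⟩ = _
          rw [pyrVert_c2 (by omega : (j:ℕ) < K+2)]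
        rw [Finset.sum_congr rfl hc, Fin.sum_univ_eq_sum_range
          (fun n => pyrLam K γ x (n+2) * pyrNode K γ n) (K+2)]
        rw [hS1]
        show _ = pyrCurve K γ x ⟨2, hiv⟩
        rw [pyrCurve, dif_neg (by simp), dif_neg (by simp), dif_pos rfl]
        ring
      · obtain ⟨jj, rfl⟩ : ∃ jj, iv = jj + 3 := ⟨iv - 3, by omega⟩
        have hjjK : jj < K := by omega
        rw [if_neg (by simp)]
        have hτ1 : pyrNode K γ (jj+1) < 1 := by
          rw [pyrNode_knot (by omega) (by omega)]
          exact hγ1 _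
        have hc : ∀ j ∈ (Finset.univ : Finset (Fin (K+2))),
            pyrLam K γ x ((⟨j.val+2, by omega⟩ : Fin (K+4)) : ℕ)
                * pyrVert K γ ⟨j.val+2, by omega⟩ ⟨jj+3, hiv⟩
            = (fun n => (pyrLam K γ x (n+2) *
                (if jj+1 < n then pyrNode K γ n - pyrNode K γ (jj+1) else 0))
              * (1 - pyrNode K γ (jj+1))^2) j.val := by
          intro j _
          show pyrLam K γ x (j.val+2) * pyrVert K γ ⟨j.val+2, by omega⟩ ⟨jj+3, hiv⟩ = _
          rw [pyrVert_c3 (by omega : (j:ℕ) < K+2) hjjK]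
          simp only []
          ring
        have hS2 := pyrS2 (γ := γ) (x := x) hγ0 hγ1 hγmono hx0 hx1
          (J := jj+1) (by omega) (by omega)
        rw [Finset.sum_congr rfl hc, Fin.sum_univ_eq_sum_range
          (fun n => (pyrLam K γ x (n+2) *
              (if jj+1 < n then pyrNode K γ n - pyrNode K γ (jj+1) else 0))
            * (1 - pyrNode K γ (jj+1))^2) (K+2)]
        rw [← Finset.sum_mul, hS2]
        have hval : pyrPhi K γ x (jj+1) * (1 - pyrNode K γ (jj+1))^2
            = pyrCurve K γ x ⟨jj+3, hiv⟩ := by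
          rw [pyrCurve, dif_neg (by simp), dif_neg (by simp), dif_neg (by simp), pyrPhi,
            div_mul_cancel₀ _ (by nlinarith [hτ1] : (1 - pyrNode K γ (jj+1))^2 ≠ 0)]
          rw [pyrNode_knot (by omega) (by omega)]
          rfl
        rw [hval]
        ring

end rep

lemma pyr_affine_sum {K : ℕ} {γ : Fin K → ℝ} {x : ℝ} (lam : Fin (K+4) → ℝ)
    (hB : ∑ p : Fin (K+4), lam p = 1)
    (hA : ∀ i, ∑ p : Fin (K+4), lam p * pyrVert K γ p i = pyrCurve K γ x i)
    (c0 c1 c2 c3 : ℝ) (ε : Fin K → ℝ) :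
    ∑ p : Fin (K+4), lam p * (c0 + c1 * pyrVert K γ p ⟨0, by simp⟩
        + c2 * pyrVert K γ p ⟨1, by simp⟩ + c3 * pyrVert K γ p ⟨2, by simp⟩
        + ∑ k : Fin K, ε k * pyrVert K γ p ⟨k.val+3, by simp⟩)
      = c0 + c1 * pyrCurve K γ x ⟨0, by simp⟩ + c2 * pyrCurve K γ x ⟨1, by simp⟩
        + c3 * pyrCurve K γ x ⟨2, by simp⟩
        + ∑ k : Fin K, ε k * pyrCurve K γ x ⟨k.val+3, by simp⟩ := by
  have hterm : ∀ p ∈ (Finset.univ : Finset (Fin (K+4))),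
      lam p * (c0 + c1 * pyrVert K γ p ⟨0, by omega⟩
        + c2 * pyrVert K γ p ⟨1, by omega⟩ + c3 * pyrVert K γ p ⟨2, by omega⟩
        + ∑ k : Fin K, ε k * pyrVert K γ p ⟨k.val+3, by have := k.isLt; omega⟩)
      = lam p * c0 + c1 * (lam p * pyrVert K γ p ⟨0, by omega⟩)
        + c2 * (lam p * pyrVert K γ p ⟨1, by omega⟩)
        + c3 * (lam p * pyrVert K γ p ⟨2, by omega⟩)
        + ∑ k : Fin K, ε k * (lam p * pyrVert K γ p ⟨k.val+3, by have := k.isLt; omega⟩) := by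
    intro p _
    rw [mul_add, mul_add, mul_add, mul_add, Finset.mul_sum]
    rw [Finset.sum_congr rfl (fun k _ => by
      show lam p * (ε k * pyrVert K γ p ⟨k.val+3, by have := k.isLt; omega⟩)
          = ε k * (lam p * pyrVert K γ p ⟨k.val+3, by have := k.isLt; omega⟩)
      ring)]
    ring
  rw [Finset.sum_congr rfl hterm]
  rw [Finset.sum_add_distrib, Finset.sum_add_distrib, Finset.sum_add_distrib,
    Finset.sum_add_distrib]
  rw [← Finset.sum_mul, hB, one_mul]
  rw [← Finset.mul_sum, ← Finset.mul_sum, ← Finset.mul_sum]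
  rw [hA, hA, hA, Finset.sum_comm]
  congr 1
  refine Finset.sum_congr rfl (fun k _ => ?_)
  rw [← Finset.mul_sum, hA]

open Finset

/-- If the affine evaluations of two cubic spline curves are ordered at all `K+4`
vertices `v₁, …, v_{K+4}`, then the spline curves are ordered (do not cross)
everywhere on `[0,1]`. -/
theorem splines_noncrossing_of_le_at_verts (K : ℕ) (γ : Fin K → ℝ)
    (hγ0 : ∀ k, 0 < γ k) (hγ1 : ∀ k, γ k < 1) (hγmono : StrictMono γ)
    (a0 a1 a2 a3 : ℝ) (η : Fin K → ℝ) (b0 b1 b2 b3 : ℝ) (ζ : Fin K → ℝ)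
    (f g : ℝ → ℝ)
    (hf : ∀ x, f x = a0 + a1 * x + a2 * x ^ 2 + a3 * x ^ 3 +
      ∑ k : Fin K, η k * (max (x - γ k) 0) ^ 3)
    (hg : ∀ x, g x = b0 + b1 * x + b2 * x ^ 2 + b3 * x ^ 3 +
      ∑ k : Fin K, ζ k * (max (x - γ k) 0) ^ 3)
    (F G : (Fin (K + 3) → ℝ) → ℝ)
    (hF : ∀ w, F w = a0 + a1 * w ⟨0, by omega⟩ + a2 * w ⟨1, by omega⟩ +
      a3 * w ⟨2, by omega⟩ +
      ∑ k : Fin K, η k * w ⟨k.val + 3, by have := k.isLt; omega⟩)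
    (hG : ∀ w, G w = b0 + b1 * w ⟨0, by omega⟩ + b2 * w ⟨1, by omega⟩ +
      b3 * w ⟨2, by omega⟩ +
      ∑ k : Fin K, ζ k * w ⟨k.val + 3, by have := k.isLt; omega⟩)
    (hle : ∀ p : Fin (K + 4), F (pyrVert K γ p) ≤ G (pyrVert K γ p)) :
    ∀ x ∈ Set.Icc (0 : ℝ) 1, f x ≤ g x := by
  intro x hx
  obtain ⟨hx0, hx1⟩ := hx
  set lam : Fin (K+4) → ℝ := fun p => pyrLam K γ x p.val with hlam
  have hB : ∑ p : Fin (K+4), lam p = 1 := pyrLam_total hγ0 hγ1 hγmono hx0 hx1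
  have hA : ∀ i, ∑ p : Fin (K+4), lam p * pyrVert K γ p i = pyrCurve K γ x i :=
    fun i => pyrRep hγ0 hγ1 hγmono hx0 hx1 i
  have hC : ∀ p : Fin (K+4), 0 ≤ lam p :=
    fun p => pyrLam_nonneg hγ0 hγ1 hγmono hx0 hx1 p.val p.isLt
  have hfc : f x = F (pyrCurve K γ x) := by
    rw [hf, hF]
    rfl
  have hgc : g x = G (pyrCurve K γ x) := by
    rw [hg, hG]
    rfl
  have hFsum : ∑ p : Fin (K+4), lam p * F (pyrVert K γ p) = F (pyrCurve K γ x) := by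
    rw [hF (pyrCurve K γ x)]
    rw [Finset.sum_congr rfl (fun p _ => by rw [hF (pyrVert K γ p)])]
    exact pyr_affine_sum lam hB hA a0 a1 a2 a3 η
  have hGsum : ∑ p : Fin (K+4), lam p * G (pyrVert K γ p) = G (pyrCurve K γ x) := by
    rw [hG (pyrCurve K γ x)]
    rw [Finset.sum_congr rfl (fun p _ => by rw [hG (pyrVert K γ p)])]
    exact pyr_affine_sum lam hB hA b0 b1 b2 b3 ζ
  rw [hfc, hgc, ← hFsum, ← hGsum]
  exact Finset.sum_le_sum (fun p _ => mul_le_mul_of_nonneg_left (hle p) (hC p))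
end

section
/- For every x ∈ [0,1], the point (x, x², x³) lies in the convex hull of the four points (0,0,0), (1/2,0,0), (2/3,1/3,0), (1,1,1) in ℝ³. -/
/-- For every `x ∈ [0,1]`, the point `(x, x², x³)` lies in the convex hull of the
four points `(0,0,0)`, `(1/2,0,0)`, `(2/3,1/3,0)`, `(1,1,1)` in `ℝ³`. -/
theorem moment_curve_mem_tetrahedron :
    ∀ x ∈ Set.Icc (0 : ℝ) 1,
      (![x, x ^ 2, x ^ 3] : Fin 3 → ℝ) ∈
        convexHull ℝ
          ({![0, 0, 0], ![1 / 2, 0, 0], ![2 / 3, 1 / 3, 0], ![1, 1, 1]} :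
            Set (Fin 3 → ℝ)) := by
  rintro x ⟨hx0, hx1⟩
  set w : Fin 4 → ℝ := ![(1 - x) ^ 2, 2 * x * (1 - x) ^ 2, 3 * x ^ 2 * (1 - x), x ^ 3] with hw
  set z : Fin 4 → Fin 3 → ℝ :=
    ![![0, 0, 0], ![1 / 2, 0, 0], ![2 / 3, 1 / 3, 0], ![1, 1, 1]] with hz
  have hx1' : 0 ≤ 1 - x := by linarith
  have key : (![x, x ^ 2, x ^ 3] : Fin 3 → ℝ) = ∑ i : Fin 4, w i • z i := by
    funext j
    fin_cases j <;>
      simp [hw, hz, Fin.sum_univ_four] <;> ring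
  rw [key]
  apply (convex_convexHull ℝ _).sum_mem
  · intro i _
    fin_cases i <;> simp [hw] <;> positivity
  · simp [hw, Fin.sum_univ_four]; ring
  · intro i _
    apply subset_convexHull
    fin_cases i <;> simp [hz]
end

section
/- Let γ ∈ (0,1) and write z₊ = max(z,0). For every x ∈ [0,1], the point (x, x², x³, ((x−γ)₊)³) lies in the convex hull of the five points (0,0,0,0), (1/2,0,0,0), (2/3,1/3,0,0), ((2+γ)/3, (1+2γ)/3, γ, 0), (1,1,1,(1−γ)³) in ℝ⁴. -/
set_option maxHeartbeats 1000000


/-- For `γ ∈ (0,1)` and every `x ∈ [0,1]`, the point `(x, x², x³, ((x−γ)₊)³)`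
lies in the convex hull of the five points `(0,0,0,0)`, `(1/2,0,0,0)`,
`(2/3,1/3,0,0)`, `((2+γ)/3, (1+2γ)/3, γ, 0)`, `(1,1,1,(1−γ)³)` in `ℝ⁴`. -/
theorem truncated_cubic_curve_mem_polytope (γ : ℝ) (hγ : γ ∈ Set.Ioo (0 : ℝ) 1) :
    ∀ x ∈ Set.Icc (0 : ℝ) 1,
      (![x, x ^ 2, x ^ 3, (max (x - γ) 0) ^ 3] : Fin 4 → ℝ) ∈
        convexHull ℝ
          ({![0, 0, 0, 0], ![1 / 2, 0, 0, 0], ![2 / 3, 1 / 3, 0, 0],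
            ![(2 + γ) / 3, (1 + 2 * γ) / 3, γ, 0],
            ![1, 1, 1, (1 - γ) ^ 3]} : Set (Fin 4 → ℝ)) := by
  obtain ⟨hγ0, hγ1⟩ := hγ
  intro x hx
  obtain ⟨hx0, hx1⟩ := hx
  have hγ0' : (0:ℝ) < γ := hγ0
  have h1γ : (0:ℝ) < 1 - γ := by linarith
  set p : ℝ := max (x - γ) 0 with hp
  have hp0 : 0 ≤ p := le_max_right _ _
  set q : ℝ := p / (1 - γ) with hq
  have hq0 : 0 ≤ q := div_nonneg hp0 h1γ.le
  have hqx : q ≤ x := by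
    rw [hq, div_le_iff₀ h1γ]
    have h1 : x - γ ≤ x * (1 - γ) := by nlinarith
    have h2 : (0:ℝ) ≤ x * (1 - γ) := mul_nonneg hx0 h1γ.le
    exact max_le h1 h2
  set a0 : ℝ := (1 - x) ^ 2 with ha0def
  set a1 : ℝ := 2 * x * (1 - x) ^ 2 with ha1def
  set a4 : ℝ := q ^ 3 with ha4def
  set a3 : ℝ := (x ^ 3 - q ^ 3) / γ with ha3def
  set a2 : ℝ := 3 * x ^ 2 - (1 + 2 * γ) * a3 - 3 * a4 with ha2def
  have ha0 : 0 ≤ a0 := sq_nonneg _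
  have ha1 : 0 ≤ a1 := by
    have := sq_nonneg (1 - x); nlinarith
  have ha4 : 0 ≤ a4 := pow_nonneg hq0 3
  have ha3 : 0 ≤ a3 := by
    apply div_nonneg _ hγ0'.le
    have := pow_le_pow_left₀ hq0 hqx 3
    linarith
  have ha2 : 0 ≤ a2 := by
    rcases le_total x γ with h | h
    · have hpz : p = 0 := max_eq_right (by linarith)
      have hqz : q = 0 := by rw [hq, hpz]; simp
      have key : a2 * γ = x ^ 2 * (3 * γ - x - 2 * γ * x) := by
        rw [ha2def, ha3def, ha4def, hqz]
        field_simp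
        ring
      have hrhs : 0 ≤ x ^ 2 * (3 * γ - x - 2 * γ * x) := by
        apply mul_nonneg (sq_nonneg _)
        nlinarith
      nlinarith [key, hrhs, hγ0']
    · have hpz : p = x - γ := max_eq_left (by linarith)
      have key : a2 * (γ * (1 - γ) ^ 3)
          = γ ^ 2 * (1 - γ) * (1 - x) ^ 2 * (3 * x - γ - 2 * γ * x) := by
        rw [ha2def, ha3def, ha4def, hq, hpz]
        field_simp
        ring
      have hrhs : 0 ≤ γ ^ 2 * (1 - γ) * (1 - x) ^ 2 * (3 * x - γ - 2 * γ * x) := by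
        apply mul_nonneg
        apply mul_nonneg (mul_nonneg (sq_nonneg _) h1γ.le) (sq_nonneg _)
        nlinarith
      nlinarith [key, hrhs, mul_pos hγ0' (pow_pos h1γ 3)]
  -- weights and vertices
  set w : Fin 5 → ℝ := ![a0, a1, a2, a3, a4] with hw
  set z : Fin 5 → (Fin 4 → ℝ) :=
    ![![0, 0, 0, 0], ![1 / 2, 0, 0, 0], ![2 / 3, 1 / 3, 0, 0],
      ![(2 + γ) / 3, (1 + 2 * γ) / 3, γ, 0], ![1, 1, 1, (1 - γ) ^ 3]] with hz
  have hwnn : ∀ i ∈ Finset.univ, 0 ≤ w i := by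
    intro i _
    fin_cases i <;> simpa [hw] using (by assumption : _)
  have hwsum : ∑ i : Fin 5, w i = 1 := by
    simp only [hw, Fin.sum_univ_five, Matrix.cons_val_zero, Matrix.cons_val_one,
      Matrix.head_cons, Matrix.cons_val_two, Matrix.tail_cons, Matrix.cons_val_three,
      Matrix.cons_val_four]
    rw [ha0def, ha1def, ha2def, ha3def, ha4def]
    field_simp
    ring
  have hzmem : ∀ i ∈ Finset.univ, z i ∈
      ({![0, 0, 0, 0], ![1 / 2, 0, 0, 0], ![2 / 3, 1 / 3, 0, 0],
        ![(2 + γ) / 3, (1 + 2 * γ) / 3, γ, 0],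
        ![1, 1, 1, (1 - γ) ^ 3]} : Set (Fin 4 → ℝ)) := by
    intro i _
    fin_cases i <;> simp [hz]
  have hmem := (convex_convexHull ℝ
      ({![0, 0, 0, 0], ![1 / 2, 0, 0, 0], ![2 / 3, 1 / 3, 0, 0],
        ![(2 + γ) / 3, (1 + 2 * γ) / 3, γ, 0],
        ![1, 1, 1, (1 - γ) ^ 3]} : Set (Fin 4 → ℝ))).sum_mem hwnn hwsum
      (fun i hi => subset_convexHull ℝ _ (hzmem i hi))
  have hcomb : (![x, x ^ 2, x ^ 3, p ^ 3] : Fin 4 → ℝ) = ∑ i : Fin 5, w i • z i := by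
    funext j
    simp only [Finset.sum_apply, Pi.smul_apply, smul_eq_mul, Fin.sum_univ_five, hw, hz]
    have hpq : p = q * (1 - γ) := by
      rw [hq]; field_simp
    fin_cases j
    · simp only [Matrix.cons_val_zero, Matrix.cons_val_one, Matrix.head_cons,
        Matrix.cons_val_two, Matrix.tail_cons, Matrix.cons_val_three, Matrix.cons_val_four,
        Matrix.cons_val', Matrix.empty_val', Matrix.cons_val_fin_one,
        Fin.reduceFinMk, Fin.isValue, Matrix.vecHead]
      rw [ha0def, ha1def, ha2def, ha3def, ha4def]
      field_simp
      try ring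
    · simp only [Matrix.cons_val_zero, Matrix.cons_val_one, Matrix.head_cons,
        Matrix.cons_val_two, Matrix.tail_cons, Matrix.cons_val_three, Matrix.cons_val_four,
        Matrix.cons_val', Matrix.empty_val', Matrix.cons_val_fin_one,
        Fin.reduceFinMk, Fin.isValue, Matrix.vecHead]
      rw [ha0def, ha1def, ha2def, ha3def, ha4def]
      field_simp
      try ring
    · simp only [Matrix.cons_val_zero, Matrix.cons_val_one, Matrix.head_cons,
        Matrix.cons_val_two, Matrix.tail_cons, Matrix.cons_val_three, Matrix.cons_val_four,
        Matrix.cons_val', Matrix.empty_val', Matrix.cons_val_fin_one,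
        Fin.reduceFinMk, Fin.isValue, Matrix.vecHead]
      rw [ha0def, ha1def, ha2def, ha3def, ha4def]
      field_simp
      try ring
    · simp only [Matrix.cons_val_zero, Matrix.cons_val_one, Matrix.head_cons,
        Matrix.cons_val_two, Matrix.tail_cons, Matrix.cons_val_three, Matrix.cons_val_four,
        Matrix.cons_val', Matrix.empty_val', Matrix.cons_val_fin_one,
        Fin.reduceFinMk, Fin.isValue, Matrix.vecHead]
      rw [ha0def, ha1def, ha2def, ha3def, ha4def, hpq]
      field_simp
      try ring
  rw [hcomb]
  exact hmem
end
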